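/- arXiv:1905.05302 — 2 statements merged into one kernel-verified Lean document; each statement's English description precedes it below -/
import Mathlib

section
/- Let (W,S) be a Coxeter system, W₁ a standard parabolic subgroup, σ, w ∈ W, and set J_{σW₁}(w) = { v ∈ σW₁ : w ≤ v }. Suppose that σ is the unique minimal element of the coset σW₁, and let s ∈ S be such that sσ < σ. Then: (1) sx < x for every x ∈ J_{σW₁}(w), and v < sv for every v ∈ J_{sσW₁}(w ∧ sw); (2) J_{σW₁}(w) = s·J_{sσW₁}(w ∧ sw); in particular J_{σW₁}(w) = J_{σW₁}(w ∧ sw) = J_{σW₁}(w ∨ sw); (3) if either J_{σW₁}(w) or J_{sσW₁}(w ∧ sw) has a unique minimal element u in the Bruhat order, then so does the other, and that unique minimal element is su. -/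
variable {B W : Type*} [Group W] {M : CoxeterMatrix B}

/-- The (strong) Bruhat order on the Coxeter group `W`: `u ≤ v` if and only if some
reduced word for `v` admits a sublist whose product is `u`. -/
def BruhatLE (cs : CoxeterSystem M W) (u v : W) : Prop :=
  ∃ ω : List B, cs.IsReduced ω ∧ cs.wordProd ω = v ∧
    ∃ ω' : List B, ω'.Sublist ω ∧ cs.wordProd ω' = u

/-- The strict Bruhat order. -/
def BruhatLT (cs : CoxeterSystem M W) (u v : W) : Prop :=
  BruhatLE cs u v ∧ u ≠ v

/-- `m` is the unique minimal element of `K` in the Bruhat order, i.e. `m ∈ K` and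
`m` is Bruhat-below every element of `K`. -/
def IsBrMin (cs : CoxeterSystem M W) (K : Set W) (m : W) : Prop :=
  m ∈ K ∧ ∀ x ∈ K, BruhatLE cs m x

/-- `m` is the unique maximal element of `K` in the Bruhat order, i.e. `m ∈ K` and
`m` is Bruhat-above every element of `K`. -/
def IsBrMax (cs : CoxeterSystem M W) (K : Set W) (m : W) : Prop :=
  m ∈ K ∧ ∀ x ∈ K, BruhatLE cs x m

/-- A standard parabolic subgroup: a subgroup generated by a subset of the simple
reflections. -/
def IsStdParabolic (cs : CoxeterSystem M W) (P : Subgroup W) : Prop :=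
  ∃ X : Set B, P = Subgroup.closure (cs.simple '' X)

/-- The left coset `u•W₁ = {u * b : b ∈ W₁}`. -/
def lCoset (W₁ : Subgroup W) (u : W) : Set W := {x | ∃ b ∈ W₁, x = u * b}

/-- The double coset `W₁ u W₂ = {a * u * b : a ∈ W₁, b ∈ W₂}`. -/
def dblCoset (W₁ W₂ : Subgroup W) (u : W) : Set W :=
  {x | ∃ a ∈ W₁, ∃ b ∈ W₂, x = a * u * b}

/-- `J_{σW₁}(w) = { v ∈ σW₁ : w ≤ v }`. -/
def Jset (cs : CoxeterSystem M W) (W₁ : Subgroup W) (σ w : W) : Set W :=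
  {v | v ∈ lCoset W₁ σ ∧ BruhatLE cs w v}

namespace BruhatAux
open scoped Classical
set_option linter.unusedSectionVars false

variable (cs : CoxeterSystem M W)

local prefix:100 "σ" => cs.simple
local prefix:100 "π" => cs.wordProd
local prefix:100 "ℓ" => cs.length
local prefix:100 "ris" => cs.rightInvSeq
local prefix:100 "lis" => cs.leftInvSeq

/-- parity count of `t` in a list, valued in `ZMod 2`. -/
noncomputable def cnt (t : W) (l : List W) : ZMod 2 :=
  (l.map (fun x => if x = t then (1 : ZMod 2) else 0)).sum

@[simp] lemma cnt_nil (t : W) : cnt t ([] : List W) = 0 := rfl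

@[simp] lemma cnt_cons (t a : W) (l : List W) :
    cnt t (a :: l) = (if a = t then (1 : ZMod 2) else 0) + cnt t l := by
  simp [cnt]

@[simp] lemma cnt_append (t : W) (l l' : List W) :
    cnt t (l ++ l') = cnt t l + cnt t l' := by
  simp [cnt]

lemma cnt_reverse (t : W) (l : List W) : cnt t l.reverse = cnt t l := by
  simp [cnt, List.sum_reverse]

lemma cnt_map_conj (t g : W) (l : List W) :
    cnt t (l.map (fun x => g⁻¹ * x * g)) = cnt (g * t * g⁻¹) l := by
  unfold cnt
  rw [List.map_map]
  congr 1
  apply List.map_congr_left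
  intro x _
  simp only [Function.comp_apply]
  congr 1
  apply propext
  constructor
  · intro h; rw [← h]; group
  · intro h; rw [h]; group

lemma cnt_eq_zero_of_not_mem {t : W} {l : List W} (h : t ∉ l) : cnt t l = 0 := by
  induction l with
  | nil => rfl
  | cons a l ih =>
    simp only [List.mem_cons, not_or] at h
    have : ¬ (a = t) := fun hh => h.1 hh.symm
    rw [cnt_cons, if_neg this, ih h.2, add_zero]

lemma mem_of_cnt_eq_one {t : W} {l : List W} (h : cnt t l = 1) : t ∈ l := by
  by_contra hc
  rw [cnt_eq_zero_of_not_mem hc] at h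
  exact one_ne_zero h.symm

lemma add_self_zmod2 (a : ZMod 2) : a + a = 0 := by
  have : (2 : ZMod 2) = 0 := rfl
  calc a + a = 2 * a := (two_mul a).symm
  _ = 0 := by rw [this, zero_mul]

/-- the basic involution on `W × ZMod 2` attached to a simple reflection. -/
noncomputable def permFun (i : B) : W × ZMod 2 → W × ZMod 2 :=
  fun p => (σ i * p.1 * σ i, p.2 + if p.1 = σ i then 1 else 0)

lemma permFun_involutive (i : B) : Function.Involutive (permFun cs i) := by
  intro p
  unfold permFun
  have h1 : σ i * (σ i * p.1 * σ i) * σ i = p.1 := by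
    calc σ i * (σ i * p.1 * σ i) * σ i = (σ i * σ i) * p.1 * (σ i * σ i) := by group
    _ = p.1 := by rw [cs.simple_mul_simple_self]; group
  have h2 : (σ i * p.1 * σ i = σ i) ↔ (p.1 = σ i) := by
    constructor
    · intro h
      have h3 := congrArg (fun x => σ i * x * σ i) h
      rw [h1] at h3
      rw [h3]
      calc σ i * σ i * σ i = (σ i * σ i) * σ i := by group
      _ = σ i := by rw [cs.simple_mul_simple_self]; group
    · intro h
      rw [h]
      calc σ i * σ i * σ i = (σ i * σ i) * σ i := by group
      _ = σ i := by rw [cs.simple_mul_simple_self]; group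
  ext
  · exact h1
  · simp only [h2]
    rcases em (p.1 = σ i) with h | h
    · simp [h, add_assoc, add_self_zmod2]
    · simp [h]

/-- the permutation of `W × ZMod 2` attached to a simple reflection. -/
noncomputable def perm (i : B) : Equiv.Perm (W × ZMod 2) :=
  (permFun_involutive cs i).toPerm _

@[simp] lemma perm_apply (i : B) (p : W × ZMod 2) :
    perm cs i p = (σ i * p.1 * σ i, p.2 + if p.1 = σ i then 1 else 0) := rfl

lemma ris_cons (i : B) (ω : List B) :
    ris (i :: ω) = ((π ω)⁻¹ * (σ i) * (π ω)) :: ris ω := rfl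

lemma rightInvSeq_append (ω ω' : List B) :
    ris (ω ++ ω') =
      (ris ω).map (fun x => (π ω')⁻¹ * x * (π ω')) ++ ris ω' := by
  induction ω with
  | nil => simp [CoxeterSystem.rightInvSeq_nil]
  | cons i ω ih =>
    rw [List.cons_append, ris_cons, ris_cons, ih, cs.wordProd_append,
      List.map_cons, List.cons_append]
    congr 1
    rw [mul_inv_rev]
    group

/-- key computation: the action of a product of `perm`s. -/
lemma prod_perm_apply (ω : List B) (t : W) (ε : ZMod 2) :
    ((ω.map (perm cs)).prod) (t, ε) = (π ω * t * (π ω)⁻¹, ε + cnt t (ris ω)) := by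
  induction ω with
  | nil => simp
  | cons i ω ih =>
    rw [List.map_cons, List.prod_cons, Equiv.Perm.mul_apply, ih, perm_apply,
      ris_cons, cs.wordProd_cons, cnt_cons]
    have hiff : (π ω * t * (π ω)⁻¹ = σ i) ↔ ((π ω)⁻¹ * (σ i) * (π ω) = t) := by
      constructor
      · intro h; rw [← h]; group
      · intro h; rw [← h]; group
    ext
    · show σ i * (π ω * t * (π ω)⁻¹) * σ i = _
      rw [mul_inv_rev, cs.inv_simple]; group
    · show ε + cnt t (ris ω) + (if π ω * t * (π ω)⁻¹ = σ i then 1 else 0) = _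
      simp only [hiff]
      ring

/-! ### Braid relation for `perm` -/

section Braid

variable (i j : B)

/-- the word `[i,j,i,j,...]` of length `2m`. -/
def braidWord : ℕ → List B
  | 0 => []
  | (m+1) => i :: j :: braidWord m

lemma braidWord_succ (m : ℕ) : braidWord i j (m+1) = [i, j] ++ braidWord i j m := rfl

lemma prod_perm_braidWord (m : ℕ) :
    ((braidWord i j m).map (perm cs)).prod = (perm cs i * perm cs j) ^ m := by
  induction m with
  | zero => simp [braidWord]
  | succ m ih =>
    rw [braidWord_succ, List.map_append, List.prod_append, ih, pow_succ']
    simp [braidWord, mul_assoc]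

lemma wordProd_braidWord (m : ℕ) : π (braidWord i j m) = (σ i * σ j) ^ m := by
  induction m with
  | zero => simp [braidWord]
  | succ m ih =>
    rw [braidWord_succ, cs.wordProd_append, ih, pow_succ']
    simp [braidWord, cs.wordProd_cons, mul_assoc]

lemma ris_pair : ris [i, j] = [σ j * σ i * σ j, σ j] := by
  rw [ris_cons, ris_cons]
  simp [cs.inv_simple]

/-- `σ j` conjugated through powers of `p = σ i * σ j`. -/
lemma sj_pow_sj (a : ℕ) : σ j * (σ i * σ j) ^ a * σ j = ((σ i * σ j) ^ a)⁻¹ := by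
  induction a with
  | zero => simp [cs.simple_mul_simple_self]
  | succ a ih =>
    have hji : σ j * (σ i * σ j) * σ j = (σ i * σ j)⁻¹ := by
      rw [mul_inv_rev, cs.inv_simple, cs.inv_simple]
      calc σ j * (σ i * σ j) * σ j = σ j * σ i * (σ j * σ j) := by group
      _ = σ j * σ i := by rw [cs.simple_mul_simple_self]; group
    calc σ j * (σ i * σ j) ^ (a+1) * σ j
        = (σ j * (σ i * σ j) ^ a * σ j) * (σ j * (σ i * σ j) * σ j) := by
          rw [pow_succ]
          calc σ j * ((σ i * σ j) ^ a * (σ i * σ j)) * σ j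
              = (σ j * (σ i * σ j) ^ a) * ((σ j * σ j) * (σ i * σ j)) * σ j := by
                rw [cs.simple_mul_simple_self]; group
          _ = _ := by group
    _ = ((σ i * σ j) ^ a)⁻¹ * (σ i * σ j)⁻¹ := by rw [ih, hji]
    _ = ((σ i * σ j) ^ (a+1))⁻¹ := by rw [← mul_inv_rev, ← pow_succ']

lemma cnt_ris_braidWord (t : W) (m : ℕ) :
    cnt t (ris (braidWord i j m)) =
      ∑ k ∈ Finset.range m,
        ((if ((σ i * σ j) ^ k)⁻¹ * (σ j * σ i * σ j) * (σ i * σ j) ^ k = t then (1 : ZMod 2) else 0)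
          + (if ((σ i * σ j) ^ k)⁻¹ * σ j * (σ i * σ j) ^ k = t then 1 else 0)) := by
  induction m with
  | zero => simp [braidWord]
  | succ m ih =>
    rw [braidWord_succ, rightInvSeq_append cs, cnt_append, ih, ris_pair cs,
      wordProd_braidWord cs, Finset.sum_range_succ]
    simp only [List.map_cons, List.map_nil, cnt_cons, cnt_nil]
    ring

lemma sum_range_split (f : ℕ → ZMod 2) (a b : ℕ) :
    ∑ k ∈ Finset.range (a + b), f k
      = (∑ k ∈ Finset.range a, f k) + ∑ k ∈ Finset.range b, f (a + k) := by
  induction b with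
  | zero => simp
  | succ b ih => rw [← Nat.add_assoc, Finset.sum_range_succ, ih, Finset.sum_range_succ]; ring

lemma sum_range_rot (g : ℕ → ZMod 2) (m c : ℕ) (hm : 0 < m) :
    ∑ k ∈ Finset.range m, g ((k + c) % m) = ∑ k ∈ Finset.range m, g k := by
  have harith : ∀ k < m, ((k + c) % m + (m - c % m)) % m = k := by
    intro k hk
    rw [Nat.mod_add_mod]
    have h2 := Nat.mod_add_div c m
    have h3 : k + c + (m - c % m) = k + m + m * (c / m) := by
      have h1 : c % m < m := Nat.mod_lt _ hm
      omega
    rw [h3]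
    simp [Nat.add_mul_mod_self_left, Nat.add_mod_right, Nat.mod_eq_of_lt hk]
  have harith2 : ∀ k < m, ((k + (m - c % m)) % m + c) % m = k := by
    intro k hk
    rw [Nat.mod_add_mod]
    have h2 := Nat.mod_add_div c m
    have h3 : k + (m - c % m) + c = k + m + m * (c / m) := by
      have h1 : c % m < m := Nat.mod_lt _ hm
      omega
    rw [h3]
    simp [Nat.add_mul_mod_self_left, Nat.add_mod_right, Nat.mod_eq_of_lt hk]
  refine Finset.sum_nbij' (fun k => (k + c) % m) (fun k => (k + (m - c % m)) % m) ?_ ?_ ?_ ?_ ?_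
  · intro a ha; exact Finset.mem_range.mpr (Nat.mod_lt _ hm)
  · intro a ha; exact Finset.mem_range.mpr (Nat.mod_lt _ hm)
  · intro a ha; exact harith a (Finset.mem_range.mp ha)
  · intro a ha; exact harith2 a (Finset.mem_range.mp ha)
  · intro a ha; rfl

lemma braid_liftable : M.IsLiftable (fun i => perm cs i) := by
  intro i j
  set m := M i j with hmdef
  rcases Nat.eq_zero_or_pos m with hm | hm
  · rw [hm, pow_zero]
  have hp : (σ i * σ j) ^ m = 1 := cs.simple_mul_simple_pow i j
  apply Equiv.ext
  rintro ⟨t, ε⟩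
  rw [← prod_perm_braidWord cs, prod_perm_apply cs, wordProd_braidWord cs, hp,
    cnt_ris_braidWord cs]
  simp only [Equiv.Perm.one_apply, one_mul, inv_one, mul_one]
  suffices hS : (∑ k ∈ Finset.range m,
        ((if ((σ i * σ j) ^ k)⁻¹ * (σ j * σ i * σ j) * (σ i * σ j) ^ k = t then (1 : ZMod 2) else 0)
          + (if ((σ i * σ j) ^ k)⁻¹ * σ j * (σ i * σ j) ^ k = t then 1 else 0))) = 0 by
    rw [hS, add_zero]
  set p := σ i * σ j with hpdef
  have hsjsisj : σ j * σ i * σ j = p⁻¹ * σ j := by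
    rw [hpdef, mul_inv_rev, cs.inv_simple, cs.inv_simple]
  set g : ℕ → ZMod 2 := fun k => if (p ^ k)⁻¹ * σ j * p ^ k = t then 1 else 0 with hgdef
  set g' : ℕ → ZMod 2 := fun k => if (p ^ k)⁻¹ * (σ j * σ i * σ j) * p ^ k = t then 1 else 0
    with hg'def
  have hperiod : ∀ a, p ^ a = p ^ (a % m) := by
    intro a
    conv_lhs => rw [← Nat.div_add_mod a m]
    rw [pow_add, pow_mul, hp, one_pow, one_mul]
  have h1 : ∀ a : ℕ, σ j * p ^ a = (p ^ a)⁻¹ * σ j := by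
    intro a
    have h0 := sj_pow_sj cs i j a
    calc σ j * p ^ a = (σ j * p ^ a * σ j) * σ j := by
          rw [mul_assoc, cs.simple_mul_simple_self, mul_one]
    _ = (p ^ a)⁻¹ * σ j := by rw [h0]
  have hgen : ∀ a : ℕ, (p ^ a)⁻¹ * σ j * p ^ a = (p ^ (a + a))⁻¹ * σ j := by
    intro a
    calc (p ^ a)⁻¹ * σ j * p ^ a = (p ^ a)⁻¹ * (σ j * p ^ a) := by rw [mul_assoc]
    _ = (p ^ a)⁻¹ * ((p ^ a)⁻¹ * σ j) := by rw [h1]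
    _ = (p ^ a * p ^ a)⁻¹ * σ j := by rw [mul_inv_rev]; group
    _ = (p ^ (a + a))⁻¹ * σ j := by rw [pow_add]
  have hcomm : ∀ a : ℕ, (p ^ a)⁻¹ * p⁻¹ = p⁻¹ * (p ^ a)⁻¹ := by
    intro a
    rw [← mul_inv_rev, ← mul_inv_rev, ← pow_succ, ← pow_succ']
  have hcomm2 : ∀ a b : ℕ, p ^ a * p ^ b = p ^ b * p ^ a := by
    intro a b
    rw [← pow_add, ← pow_add, Nat.add_comm]
  rcases Nat.even_or_odd m with ⟨c, hc⟩ | ⟨c, hc⟩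
  · -- even case : m = c + c
    have hconj : (p ^ c)⁻¹ * σ j * p ^ c = σ j := by
      rw [hgen, ← hc, hp, inv_one, one_mul]
    have hconj' : (p ^ c)⁻¹ * (σ j * σ i * σ j) * p ^ c = σ j * σ i * σ j := by
      rw [hsjsisj]
      calc (p ^ c)⁻¹ * (p⁻¹ * σ j) * p ^ c
          = p⁻¹ * ((p ^ c)⁻¹ * σ j * p ^ c) := by
            rw [← mul_assoc, ← mul_assoc, hcomm]; group
      _ = p⁻¹ * σ j := by rw [hconj]
    have hgg : ∀ k, g (c + k) = g k := by
      intro k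
      have he : (p ^ (c + k))⁻¹ * σ j * p ^ (c + k) = (p ^ k)⁻¹ * σ j * p ^ k := by
        rw [pow_add, mul_inv_rev]
        calc (p ^ k)⁻¹ * (p ^ c)⁻¹ * σ j * (p ^ c * p ^ k)
            = (p ^ k)⁻¹ * ((p ^ c)⁻¹ * σ j * p ^ c) * p ^ k := by group
        _ = _ := by rw [hconj]
      simp only [hgdef, he]
    have hgg' : ∀ k, g' (c + k) = g' k := by
      intro k
      have he : (p ^ (c + k))⁻¹ * (σ j * σ i * σ j) * p ^ (c + k)
          = (p ^ k)⁻¹ * (σ j * σ i * σ j) * p ^ k := by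
        rw [pow_add, mul_inv_rev]
        calc (p ^ k)⁻¹ * (p ^ c)⁻¹ * (σ j * σ i * σ j) * (p ^ c * p ^ k)
            = (p ^ k)⁻¹ * ((p ^ c)⁻¹ * (σ j * σ i * σ j) * p ^ c) * p ^ k := by group
        _ = _ := by rw [hconj']
      simp only [hg'def, he]
    rw [hc, sum_range_split]
    have : ∀ k, g' (c + k) + g (c + k) = g' k + g k := by
      intro k; rw [hgg, hgg']
    rw [Finset.sum_congr rfl (fun k _ => this k), ← Finset.sum_add_distrib]
    apply Finset.sum_eq_zero
    intro k _
    exact add_self_zmod2 _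
  · -- odd case : m = 2 * c + 1
    set c' := c + 1 with hc'def
    have h2c' : c' + c' = m + 1 := by omega
    have hodd : (p ^ c')⁻¹ * σ j * p ^ c' = p⁻¹ * σ j := by
      rw [hgen, h2c', pow_succ, mul_inv_rev, hp, inv_one, mul_one]
    have hkey : ∀ k, g' k = g ((k + c') % m) := by
      intro k
      have hper : (p ^ ((k + c') % m))⁻¹ * σ j * p ^ ((k + c') % m)
          = (p ^ (c' + k))⁻¹ * σ j * p ^ (c' + k) := by
        rw [← hperiod (k + c'), Nat.add_comm k c']
      have he : (p ^ (c' + k))⁻¹ * σ j * p ^ (c' + k)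
          = (p ^ k)⁻¹ * (σ j * σ i * σ j) * p ^ k := by
        rw [hsjsisj, pow_add, mul_inv_rev]
        calc (p ^ k)⁻¹ * (p ^ c')⁻¹ * σ j * (p ^ c' * p ^ k)
            = (p ^ k)⁻¹ * ((p ^ c')⁻¹ * σ j * p ^ c') * p ^ k := by group
        _ = (p ^ k)⁻¹ * (p⁻¹ * σ j) * p ^ k := by rw [hodd]
        _ = _ := by group
      simp only [hgdef, hg'def, hper, he]
    rw [Finset.sum_add_distrib]
    rw [Finset.sum_congr rfl (fun k _ => hkey k)]
    rw [sum_range_rot (fun k => g k) m c' hm]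
    rw [← Finset.sum_add_distrib]
    apply Finset.sum_eq_zero
    intro k _
    exact add_self_zmod2 _

end Braid

/-- the sign representation homomorphism `W →* Perm (W × ZMod 2)`. -/
noncomputable def phi : W →* Equiv.Perm (W × ZMod 2) :=
  cs.lift ⟨fun i => perm cs i, braid_liftable cs⟩

lemma phi_simple (i : B) : phi cs (σ i) = perm cs i :=
  cs.lift_apply_simple (braid_liftable cs) i

lemma phi_wordProd (ω : List B) : phi cs (π ω) = ((ω.map (perm cs)).prod) := by
  induction ω with
  | nil => simp [cs.wordProd_nil]
  | cons i ω ih =>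
    rw [cs.wordProd_cons, map_mul, phi_simple, ih, List.map_cons, List.prod_cons]

/-- parity of the number of occurrences of `t` in the right inversion sequence;
well-defined independently of the word. -/
noncomputable def eta (w t : W) : ZMod 2 := ((phi cs w) (t, 0)).2

lemma eta_eq_cnt (ω : List B) (t : W) : eta cs (π ω) t = cnt t (ris ω) := by
  unfold eta
  rw [phi_wordProd, prod_perm_apply]
  simp

lemma lis_eq_map_ris (ρ : List B) :
    lis ρ = (ris ρ).map (fun x => (π ρ)⁻¹⁻¹ * x * (π ρ)⁻¹) := by
  induction ρ with
  | nil => simp [CoxeterSystem.leftInvSeq_nil, CoxeterSystem.rightInvSeq_nil]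
  | cons a ρ ih =>
    show CoxeterSystem.leftInvSeq cs (a :: ρ) = _
    rw [CoxeterSystem.leftInvSeq, ris_cons, List.map_cons, ih, List.map_map,
      cs.wordProd_cons]
    congr 1
    · simp only [MulAut.conj_apply, inv_inv, mul_inv_rev, cs.inv_simple]
      group
      rw [cs.simple_mul_simple_self, one_mul]
    · apply List.map_congr_left
      intro x _
      simp only [Function.comp_apply, MulAut.conj_apply, inv_inv, mul_inv_rev, cs.inv_simple]
      group

lemma eta_mul_reflection {t : W} (ht : cs.IsReflection t) (w : W) :
    eta cs (w * t) t = eta cs w t + 1 := by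
  obtain ⟨q, j, hqj⟩ := ht
  obtain ⟨ρ, _, hρ⟩ := cs.exists_reduced_word' q
  obtain ⟨ω, _, hω⟩ := cs.exists_reduced_word' w
  have hγ : π (ρ ++ ([j] ++ ρ.reverse)) = t := by
    rw [cs.wordProd_append, cs.wordProd_append, cs.wordProd_reverse]
    rw [hqj, ← hρ, cs.wordProd_singleton, mul_assoc]
  have hwt : π (ω ++ (ρ ++ ([j] ++ ρ.reverse))) = w * t := by
    rw [cs.wordProd_append, hγ, ← hω]
  rw [← hwt, eta_eq_cnt, hω, eta_eq_cnt]
  rw [rightInvSeq_append, cnt_append, hγ]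
  have h1 : cnt t ((ris ω).map fun x => t⁻¹ * x * t) = cnt t (ris ω) := by
    rw [cnt_map_conj]
    congr 1
    group
  rw [h1]
  have h2 : cnt t (ris (ρ ++ ([j] ++ ρ.reverse))) = 1 := by
    rw [rightInvSeq_append, cnt_append]
    have hris : ris ([j] ++ ρ.reverse) = t :: ris (ρ.reverse) := by
      rw [List.singleton_append, ris_cons, cs.wordProd_reverse, ← hρ]
      congr 1
      rw [hqj]
      group
    rw [hris, cnt_cons, if_pos rfl]
    have h3 : cnt t (ris (ρ.reverse)) = cnt (σ j) (ris ρ) := by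
      rw [cs.rightInvSeq_reverse, cnt_reverse]
      have hlis := lis_eq_map_ris cs ρ
      rw [hlis, cnt_map_conj, inv_inv]
      congr 1
      rw [← hρ, hqj]
      group
    have h4 : cnt t ((ris ρ).map fun x => (π ([j] ++ ρ.reverse))⁻¹ * x * π ([j] ++ ρ.reverse))
        = cnt (σ j) (ris ρ) := by
      rw [cnt_map_conj]
      congr 1
      rw [List.singleton_append, cs.wordProd_cons, cs.wordProd_reverse, ← hρ, hqj]
      group
    rw [h3, h4]
    calc cnt (σ j) (ris ρ) + (1 + cnt (σ j) (ris ρ))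
        = (cnt (σ j) (ris ρ) + cnt (σ j) (ris ρ)) + 1 := by ring
    _ = 1 := by rw [add_self_zmod2, zero_add]
  rw [h2]

lemma zmod2_cases (a : ZMod 2) : a = 0 ∨ a = 1 := by
  revert a; decide

lemma isRightInversion_iff_eta {t : W} (ht : cs.IsReflection t) (w : W) :
    cs.IsRightInversion w t ↔ eta cs w t = 1 := by
  constructor
  · intro h
    rcases zmod2_cases (eta cs w t) with h0 | h1
    · exfalso
      have h2 : eta cs (w * t) t = 1 := by rw [eta_mul_reflection cs ht, h0, zero_add]
      obtain ⟨κ, hκred, hκ⟩ := cs.exists_reduced_word' (w * t)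
      rw [hκ, eta_eq_cnt] at h2
      have h3 := cs.isRightInversion_of_mem_rightInvSeq hκred (mem_of_cnt_eq_one h2)
      rw [← hκ] at h3
      have h4 : w * t * t = w := by rw [mul_assoc, ht.mul_self, mul_one]
      have h5 := h3.2
      rw [h4] at h5
      exact Nat.lt_asymm h.2 h5
    · exact h1
  · intro h
    obtain ⟨κ, hκred, hκ⟩ := cs.exists_reduced_word' w
    rw [hκ, eta_eq_cnt] at h
    have := cs.isRightInversion_of_mem_rightInvSeq hκred (mem_of_cnt_eq_one h)
    rwa [← hκ] at this

/-- Strong exchange property, for arbitrary words. -/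
lemma strong_exchange {t : W} (ht : cs.IsReflection t) (ω : List B)
    (hlt : ℓ (π ω * t) < ℓ (π ω)) :
    ∃ j < ω.length, π (ω.eraseIdx j) = π ω * t := by
  have h1 : eta cs (π ω) t = 1 := (isRightInversion_iff_eta cs ht (π ω)).mp ⟨ht, hlt⟩
  rw [eta_eq_cnt] at h1
  have h2 := mem_of_cnt_eq_one h1
  obtain ⟨k, hk, hkt⟩ := List.mem_iff_getElem.mp h2
  rw [cs.length_rightInvSeq] at hk
  refine ⟨k, hk, ?_⟩
  have h3 := cs.wordProd_mul_getD_rightInvSeq ω k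
  rw [List.getD_eq_getElem _ _ (by rwa [cs.length_rightInvSeq])] at h3
  rw [hkt] at h3
  exact h3.symm

/-- Deletion: every word has a reduced sublist with the same product. -/
lemma exists_reduced_sublist (ω : List B) :
    ∃ κ, κ.Sublist ω ∧ cs.IsReduced κ ∧ π κ = π ω := by
  generalize hn : ω.length = n
  induction n using Nat.strong_induction_on generalizing ω with
  | _ n ih =>
  by_cases hred : cs.IsReduced ω
  · exact ⟨ω, List.Sublist.refl ω, hred, rfl⟩
  · have hstep : ∃ k, ∃ h : k < ω.length,
        ℓ (π (ω.take k) * σ (ω[k])) < ℓ (π (ω.take k)) := by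
      by_contra hcon
      push_neg at hcon
      have hall : ∀ k ≤ ω.length, ℓ (π (ω.take k)) = k := by
        intro k
        induction k with
        | zero => intro _; simp [cs.wordProd_nil]
        | succ k ihk =>
          intro hk1
          have hk : k < ω.length := by omega
          have htake : ω.take (k+1) = ω.take k ++ [ω[k]] := by
            rw [List.take_succ]
            congr 1
            rw [List.getElem?_eq_getElem hk]
            rfl
          have hcon2 := hcon k hk
          have := cs.length_mul_simple (π (ω.take k)) (ω[k])
          rw [htake, cs.wordProd_append, cs.wordProd_singleton]
          rcases this with h | h
          · rw [h, ihk (by omega)]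
          · exfalso; rw [ihk (by omega)] at *; omega
      apply hred
      have := hall ω.length (le_refl _)
      rw [List.take_length] at this
      exact this
    obtain ⟨k, hk, hlt⟩ := hstep
    obtain ⟨jj, hjj, hjjeq⟩ := strong_exchange cs (cs.isReflection_simple (ω[k]))
      (ω.take k) hlt
    set κ₀ : List B := (ω.take k).eraseIdx jj ++ ω.drop (k+1) with hκ₀
    have hsub : κ₀.Sublist ω := by
      conv_rhs => rw [← List.take_append_drop k ω]
      apply List.Sublist.append
      · exact List.eraseIdx_sublist _ _
      · rw [List.drop_eq_getElem_cons hk]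
        exact List.sublist_cons_self _ _
    have hprod : π κ₀ = π ω := by
      conv_rhs => rw [← List.take_append_drop (k+1) ω]
      rw [hκ₀, cs.wordProd_append, cs.wordProd_append, hjjeq]
      have : ω.take (k+1) = ω.take k ++ [ω[k]] := by
        rw [List.take_succ]
        congr 1
        rw [List.getElem?_eq_getElem hk]
        rfl
      rw [this, cs.wordProd_append, cs.wordProd_singleton]
    have hlen : κ₀.length < n := by
      rw [hκ₀]
      rw [List.length_append, List.length_eraseIdx]
      rw [List.length_take] at hjj ⊢
      rw [List.length_drop]
      rw [if_pos hjj]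
      omega
    obtain ⟨κ, hκsub, hκred, hκprod⟩ := ih κ₀.length hlen κ₀ rfl
    exact ⟨κ, hκsub.trans hsub, hκred, hκprod.trans hprod⟩

/-! ### The chain ("reflection") order and its equivalence with `BruhatLE` -/

/-- A single Bruhat step: multiply by a reflection on the right, increasing length. -/
def BStep (x y : W) : Prop := ∃ t : W, cs.IsReflection t ∧ y = x * t ∧ ℓ x < ℓ y

/-- The chain version of the Bruhat order. -/
def LEc (u v : W) : Prop := Relation.ReflTransGen (BStep cs) u v

lemma bstep_simple_left_desc {x : W} {i : B} (h : ℓ (σ i * x) < ℓ x) :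
    BStep cs (σ i * x) x := by
  refine ⟨(σ i * x)⁻¹ * σ i * (σ i * x), ⟨(σ i * x)⁻¹, i, by rw [inv_inv]⟩, ?_, h⟩
  calc x = σ i * (σ i * x) := by rw [cs.simple_mul_simple_cancel_left]
  _ = (σ i * x) * ((σ i * x)⁻¹ * σ i * (σ i * x)) := by group

lemma bstep_simple_left_asc {x : W} {i : B} (h : ℓ x < ℓ (σ i * x)) :
    BStep cs x (σ i * x) := by
  refine ⟨x⁻¹ * σ i * x, ⟨x⁻¹, i, by rw [inv_inv]⟩, ?_, h⟩
  group

/-- every reduced word of `v` contains a reduced subword for anything chain-below `v`. -/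
lemma chain_subword {u v : W} (h : LEc cs u v) :
    ∀ κ : List B, cs.IsReduced κ → π κ = v →
      ∃ κ', κ'.Sublist κ ∧ cs.IsReduced κ' ∧ π κ' = u := by
  induction h with
  | refl => exact fun κ hκ hπ => ⟨κ, List.Sublist.refl κ, hκ, hπ⟩
  | @tail x c hux hstep ih =>
    intro κ hκ hπ
    obtain ⟨t, ht, heq, hlt⟩ := hstep
    have hdesc : ℓ (π κ * t) < ℓ (π κ) := by
      rw [hπ, heq, mul_assoc, ht.mul_self, mul_one, ← heq]
      exact hlt
    obtain ⟨jj, hjj, hje⟩ := strong_exchange cs ht κ hdesc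
    obtain ⟨κ₁, hs1, hr1, hp1⟩ := exists_reduced_sublist cs (κ.eraseIdx jj)
    obtain ⟨κ', hs2, hr2, hp2⟩ := ih κ₁ hr1
      (by rw [hp1, hje, hπ, heq, mul_assoc, ht.mul_self, mul_one])
    exact ⟨κ', hs2.trans (hs1.trans (List.eraseIdx_sublist _ _)), hr2, hp2⟩

/-- The main mutual induction: subword implies chain; and the two lifting lemmas. -/
lemma main_ind (n : ℕ) :
    (∀ ω : List B, cs.IsReduced ω → ω.length = n →
      ∀ ω' : List B, ω'.Sublist ω → LEc cs (π ω') (π ω))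
    ∧ (∀ x : W, ℓ x = n → ∀ (i : B) (u : W), LEc cs u x →
        ℓ u < ℓ (σ i * u) → ℓ (σ i * x) < ℓ x → LEc cs (σ i * u) x)
    ∧ (∀ v : W, ℓ v = n → ∀ (i : B) (u : W), LEc cs u v →
        ℓ u < ℓ (σ i * u) → ℓ v < ℓ (σ i * v) → LEc cs (σ i * u) (σ i * v)) := by
  induction n using Nat.strong_induction_on with
  | _ n ih =>
  have F3 : ∀ ω : List B, cs.IsReduced ω → ω.length = n →
      ∀ ω' : List B, ω'.Sublist ω → LEc cs (π ω') (π ω) := by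
    intro ω hred hlen ω' hsub
    match ω, hlen with
    | [], hlen =>
      rw [List.sublist_nil.mp hsub]
      exact Relation.ReflTransGen.refl
    | z :: ω₁, hlen =>
      have hn : ω₁.length + 1 = n := by simpa using hlen
      have hred₁ : cs.IsReduced ω₁ := by
        have := CoxeterSystem.IsReduced.drop (ω := z :: ω₁) hred (j := 1)
        simpa using this
      have hlv : ℓ (π (z :: ω₁)) = n := by rw [hred]; exact hlen
      have hlv₁ : ℓ (π ω₁) = ω₁.length := hred₁
      have hstep : BStep cs (π ω₁) (π (z :: ω₁)) := by
        rw [cs.wordProd_cons]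
        apply bstep_simple_left_asc
        rw [hlv₁, ← cs.wordProd_cons, hlv]
        omega
      obtain ⟨κ, hκsub, hκred, hκπ⟩ := exists_reduced_sublist cs ω'
      rw [← hκπ]
      rcases List.sublist_cons_iff.mp (hκsub.trans hsub) with hcase | ⟨r, rfl, hr⟩
      · have h1 := (ih ω₁.length (by omega)).1 ω₁ hred₁ rfl κ hcase
        exact h1.tail hstep
      · have hrred : cs.IsReduced r := by
          have := CoxeterSystem.IsReduced.drop (ω := z :: r) hκred (j := 1)
          simpa using this
        have h1 := (ih ω₁.length (by omega)).1 ω₁ hred₁ rfl r hr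
        have hZ := (ih ω₁.length (by omega)).2.2 (π ω₁) hlv₁ z (π r) h1
        rw [cs.wordProd_cons, cs.wordProd_cons]
        apply hZ
        · have e1 : ℓ (π (z :: r)) = r.length + 1 := by rw [hκred]; simp
          rw [cs.wordProd_cons] at e1
          rw [hrred, e1]
          omega
        · rw [hlv₁, ← cs.wordProd_cons, hlv]; omega
  have Z2 : ∀ x : W, ℓ x = n → ∀ (i : B) (u : W), LEc cs u x →
      ℓ u < ℓ (σ i * u) → ℓ (σ i * x) < ℓ x → LEc cs (σ i * u) x := by
    intro x hx i u hle hu hdesc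
    have hn1 : ℓ (σ i * x) = n - 1 ∧ 1 ≤ n := by
      rcases cs.length_simple_mul x i with h | h <;> omega
    obtain ⟨μ, hμred, hμπ⟩ := cs.exists_reduced_word' (σ i * x)
    have hκred : cs.IsReduced (i :: μ) := by
      show ℓ (π (i :: μ)) = (i :: μ).length
      rw [cs.wordProd_cons, ← hμπ, cs.simple_mul_simple_cancel_left]
      have : μ.length = ℓ (σ i * x) := by rw [← hμred, ← hμπ]
      simp only [List.length_cons, hx, ← this]
      omega
    have hκπ : π (i :: μ) = x := by
      rw [cs.wordProd_cons, ← hμπ, cs.simple_mul_simple_cancel_left]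
    obtain ⟨κ', hsub, hκ'red, hκ'π⟩ := chain_subword cs hle (i :: μ) hκred hκπ
    have hμlen : μ.length = n - 1 := by
      have : μ.length = ℓ (σ i * x) := by rw [← hμred, ← hμπ]
      omega
    rcases List.sublist_cons_iff.mp hsub with hcase | ⟨r, rfl, hr⟩
    · have h1 := (ih (n-1) (by omega)).1 μ hμred hμlen κ' hcase
      rw [hκ'π, ← hμπ] at h1
      have hZ := (ih (n-1) (by omega)).2.2 (σ i * x) (by omega) i u h1 hu
        (by rw [cs.simple_mul_simple_cancel_left]; omega)
      rw [cs.simple_mul_simple_cancel_left] at hZ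
      exact hZ
    · have hrπ : π r = σ i * u := by
        rw [cs.wordProd_cons] at hκ'π
        calc π r = σ i * (σ i * π r) := by rw [cs.simple_mul_simple_cancel_left]
        _ = σ i * u := by rw [hκ'π]
      have h1 := (ih (n-1) (by omega)).1 μ hμred hμlen r hr
      rw [hrπ, ← hμπ] at h1
      exact h1.tail (bstep_simple_left_desc cs hdesc)
  refine ⟨F3, Z2, ?_⟩
  intro v hv i u hle hu hva
  rcases Relation.ReflTransGen.cases_tail hle with rfl | ⟨x, hux, hstep⟩
  · exact Relation.ReflTransGen.refl
  obtain ⟨t, ht, rfl, hlt⟩ := hstep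
  rcases cs.length_simple_mul x i with hcase | hcase
  · -- ascent at x
    have h1 := (ih (ℓ x) (by omega)).2.2 x rfl i u hux hu (by omega)
    refine h1.tail ⟨t, ht, by rw [mul_assoc], ?_⟩
    have : ℓ (σ i * (x * t)) = ℓ (x * t) + 1 := by
      rcases cs.length_simple_mul (x * t) i with h | h <;> omega
    omega
  · -- descent at x
    have h1 := (ih (ℓ x) (by omega)).2.1 x rfl i u hux hu (by omega)
    exact (h1.tail ⟨t, ht, rfl, hlt⟩).tail (bstep_simple_left_asc cs hva)

/-! ### Interface lemmas for `BruhatLE` -/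

lemma bruhatLE_iff {u v : W} : BruhatLE cs u v ↔ LEc cs u v := by
  constructor
  · rintro ⟨ω, hred, hπ, ω', hsub, hπ'⟩
    have := (main_ind cs ω.length).1 ω hred rfl ω' hsub
    rwa [hπ, hπ'] at this
  · intro h
    obtain ⟨κ, hκred, hκv⟩ := cs.exists_reduced_word' v
    obtain ⟨κ', hsub, _, hπ'⟩ := chain_subword cs h κ hκred hκv.symm
    exact ⟨κ, hκred, hκv.symm, κ', hsub, hπ'⟩

lemma le_refl (w : W) : BruhatLE cs w w := by
  obtain ⟨κ, hκred, hκv⟩ := cs.exists_reduced_word' w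
  exact ⟨κ, hκred, hκv.symm, κ, List.Sublist.refl κ, hκv.symm⟩

lemma le_trans {u v w : W} (h1 : BruhatLE cs u v) (h2 : BruhatLE cs v w) :
    BruhatLE cs u w := by
  rw [bruhatLE_iff] at *
  exact h1.trans h2

lemma length_le_of_le {u v : W} (h : BruhatLE cs u v) : ℓ u ≤ ℓ v := by
  obtain ⟨ω, hred, hπ, ω', hsub, hπ'⟩ := h
  calc ℓ u = ℓ (π ω') := by rw [hπ']
  _ ≤ ω'.length := cs.length_wordProd_le ω'
  _ ≤ ω.length := hsub.length_le
  _ = ℓ v := by rw [← hred, hπ]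

lemma lt_of_le_of_length_lt {u v : W} (h : BruhatLE cs u v) (hl : ℓ u < ℓ v) :
    BruhatLT cs u v :=
  ⟨h, fun he => by rw [he] at hl; omega⟩

lemma le_left_desc {x : W} {i : B} (h : ℓ (σ i * x) < ℓ x) : BruhatLE cs (σ i * x) x := by
  obtain ⟨μ, hμred, hμπ⟩ := cs.exists_reduced_word' (σ i * x)
  have hx1 : ℓ (σ i * x) + 1 = ℓ x := by
    have := cs.length_simple_mul x i
    have := cs.length_simple_mul_ne x i
    omega
  have hπκ : π (i :: μ) = x := by
    rw [cs.wordProd_cons, ← hμπ, cs.simple_mul_simple_cancel_left]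
  have hκred : cs.IsReduced (i :: μ) := by
    show ℓ (π (i :: μ)) = (i :: μ).length
    rw [hπκ]
    have : μ.length = ℓ (σ i * x) := by rw [← hμred, ← hμπ]
    simp only [List.length_cons, this]
    omega
  exact ⟨i :: μ, hκred, hπκ, μ, List.sublist_cons_self i μ, hμπ.symm⟩

lemma lt_left_desc {x : W} {i : B} (h : ℓ (σ i * x) < ℓ x) : BruhatLT cs (σ i * x) x :=
  lt_of_le_of_length_lt cs (le_left_desc cs h) h

lemma le_left_asc {x : W} {i : B} (h : ℓ x < ℓ (σ i * x)) : BruhatLE cs x (σ i * x) := by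
  have h2 : ℓ (σ i * (σ i * x)) < ℓ (σ i * x) := by
    rw [cs.simple_mul_simple_cancel_left]; exact h
  have := le_left_desc cs h2
  rwa [cs.simple_mul_simple_cancel_left] at this

lemma lt_left_asc {x : W} {i : B} (h : ℓ x < ℓ (σ i * x)) : BruhatLT cs x (σ i * x) :=
  lt_of_le_of_length_lt cs (le_left_asc cs h) h

/-- Lifting (property Z): both ascents. -/
lemma Z_le {u v : W} {i : B} (h : BruhatLE cs u v) (hu : ℓ u < ℓ (σ i * u))
    (hv : ℓ v < ℓ (σ i * v)) : BruhatLE cs (σ i * u) (σ i * v) := by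
  rw [bruhatLE_iff] at *
  exact (main_ind cs (ℓ v)).2.2 v rfl i u h hu hv

/-- Lifting: ascent below, descent above. -/
lemma Z2_le {u x : W} {i : B} (h : BruhatLE cs u x) (hu : ℓ u < ℓ (σ i * u))
    (hx : ℓ (σ i * x) < ℓ x) : BruhatLE cs (σ i * u) x := by
  rw [bruhatLE_iff] at *
  exact (main_ind cs (ℓ x)).2.1 x rfl i u h hu hx

/-- Lifting: if `x` has a left descent at `i` and `u ≤ x` then `s i u ≤ x`. -/
lemma L1 {u x : W} {i : B} (h : BruhatLE cs u x) (hx : ℓ (σ i * x) < ℓ x) :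
    BruhatLE cs (σ i * u) x := by
  rcases cs.length_simple_mul u i with hc | hc
  · exact Z2_le cs h (by omega) hx
  · have hne := cs.length_simple_mul_ne u i
    exact le_trans cs (le_left_desc cs (by omega)) h

/-- Lifting: if `x` has a left descent at `i` and `u ≤ x` then the smaller of `u, s i u`
is `≤ s i x`. -/
lemma L2 {u x : W} {i : B} (h : BruhatLE cs u x) (hx : ℓ (σ i * x) < ℓ x) :
    (ℓ (σ i * u) < ℓ u → BruhatLE cs (σ i * u) (σ i * x))
    ∧ (ℓ u < ℓ (σ i * u) → BruhatLE cs u (σ i * x)) := by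
  obtain ⟨μ, hμred, hμπ⟩ := cs.exists_reduced_word' (σ i * x)
  have hx1 : ℓ (σ i * x) + 1 = ℓ x := by
    have := cs.length_simple_mul x i
    have := cs.length_simple_mul_ne x i
    omega
  have hπκ : π (i :: μ) = x := by
    rw [cs.wordProd_cons, ← hμπ, cs.simple_mul_simple_cancel_left]
  have hκred : cs.IsReduced (i :: μ) := by
    show ℓ (π (i :: μ)) = (i :: μ).length
    rw [hπκ]
    have : μ.length = ℓ (σ i * x) := by rw [← hμred, ← hμπ]
    simp only [List.length_cons, this]
    omega
  obtain ⟨κ', hsub, hκ'red, hκ'π⟩ :=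
    chain_subword cs ((bruhatLE_iff cs).mp h) (i :: μ) hκred hπκ
  rcases List.sublist_cons_iff.mp hsub with hcase | ⟨r, rfl, hr⟩
  · have hle : BruhatLE cs u (σ i * x) := ⟨μ, hμred, hμπ.symm, κ', hcase, hκ'π⟩
    exact ⟨fun hd => le_trans cs (le_left_desc cs hd) hle, fun _ => hle⟩
  · have hrπ : π r = σ i * u := by
      rw [cs.wordProd_cons] at hκ'π
      calc π r = σ i * (σ i * π r) := by rw [cs.simple_mul_simple_cancel_left]
      _ = σ i * u := by rw [hκ'π]
    have hle : BruhatLE cs (σ i * u) (σ i * x) := ⟨μ, hμred, hμπ.symm, r, hr, hrπ⟩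
    have hlen : ℓ (σ i * u) < ℓ u := by
      have h1 : ℓ u = r.length + 1 := by
        rw [← hκ'π]; rw [hκ'red]; simp
      have h2 : ℓ (σ i * u) ≤ r.length := by
        rw [← hrπ]; exact cs.length_wordProd_le r
      omega
    exact ⟨fun _ => hle, fun ha => by omega⟩

/-! ### Standard parabolic subgroups -/

lemma word_mem_closure {X : Set B} {κ : List B} (h : ∀ a ∈ κ, a ∈ X) :
    π κ ∈ Subgroup.closure (cs.simple '' X) := by
  induction κ with
  | nil => rw [cs.wordProd_nil]; exact one_mem _
  | cons a κ ih =>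
    rw [cs.wordProd_cons]
    exact mul_mem (Subgroup.subset_closure ⟨a, h a List.mem_cons_self, rfl⟩)
      (ih (fun b hb => h b (List.mem_cons_of_mem a hb)))

lemma exists_X_word {X : Set B} {b : W} (hb : b ∈ Subgroup.closure (cs.simple '' X)) :
    ∃ κ : List B, (∀ a ∈ κ, a ∈ X) ∧ cs.IsReduced κ ∧ π κ = b := by
  have h0 : ∃ κ : List B, (∀ a ∈ κ, a ∈ X) ∧ π κ = b := by
    induction hb using Subgroup.closure_induction with
    | mem y hy =>
      obtain ⟨x, hx, rfl⟩ := hy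
      exact ⟨[x], by simpa using hx, by simp⟩
    | one => exact ⟨[], by simp, by simp [cs.wordProd_nil]⟩
    | mul y z hy hz ihy ihz =>
      obtain ⟨κ₁, h1, e1⟩ := ihy
      obtain ⟨κ₂, h2, e2⟩ := ihz
      refine ⟨κ₁ ++ κ₂, ?_, by rw [cs.wordProd_append, e1, e2]⟩
      intro a ha
      rcases List.mem_append.mp ha with ha | ha
      · exact h1 a ha
      · exact h2 a ha
    | inv y hy ihy =>
      obtain ⟨κ, h1, e1⟩ := ihy
      exact ⟨κ.reverse, fun a ha => h1 a (List.mem_reverse.mp ha),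
        by rw [cs.wordProd_reverse, e1]⟩
  obtain ⟨κ, hκX, hκπ⟩ := h0
  obtain ⟨κ', hsub, hred, hπ⟩ := exists_reduced_sublist cs κ
  exact ⟨κ', fun a ha => hκX a (hsub.mem ha), hred, by rw [hπ, hκπ]⟩

/-- If `σ₀` has minimal length in its coset `σ₀ W_X`, lengths add. -/
lemma parabolic_length {X : Set B} {σ₀ : W}
    (hmin : ∀ b ∈ Subgroup.closure (cs.simple '' X), ℓ σ₀ ≤ ℓ (σ₀ * b)) :
    ∀ b ∈ Subgroup.closure (cs.simple '' X), ℓ (σ₀ * b) = ℓ σ₀ + ℓ b := by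
  have key : ∀ n : ℕ, ∀ b ∈ Subgroup.closure (cs.simple '' X), ℓ b = n →
      ℓ (σ₀ * b) = ℓ σ₀ + ℓ b := by
    intro n
    induction n using Nat.strong_induction_on with
    | _ n ihn =>
    intro b hb hn
    obtain ⟨κ, hκX, hκred, hκπ⟩ := exists_X_word cs hb
    rcases List.eq_nil_or_concat κ with rfl | ⟨κ₁, x, rfl⟩
    · have : b = 1 := by rw [← hκπ, cs.wordProd_nil]
      simp [this]
    rw [List.concat_eq_append] at *
    have hκlen : κ₁.length + 1 = n := by
      have : ℓ b = (κ₁ ++ [x]).length := by rw [← hκπ]; exact hκred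
      simp at this
      omega
    set b₁ := π κ₁ with hb₁
    have hκ₁red : cs.IsReduced κ₁ := by
      have := CoxeterSystem.IsReduced.take (ω := κ₁ ++ [x]) hκred (j := κ₁.length)
      rwa [List.take_left] at this
    have hb₁len : ℓ b₁ = κ₁.length := hκ₁red
    have hb₁mem : b₁ ∈ Subgroup.closure (cs.simple '' X) :=
      word_mem_closure cs (fun a ha => hκX a (List.mem_append.mpr (Or.inl ha)))
    have hbb : b = b₁ * σ x := by
      rw [← hκπ, cs.wordProd_append, cs.wordProd_singleton]
    have hIH : ℓ (σ₀ * b₁) = ℓ σ₀ + ℓ b₁ := ihn κ₁.length (by omega) b₁ hb₁mem hb₁len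
    rcases cs.length_mul_simple (σ₀ * b₁) x with hc | hc
    · have hbl : ℓ (b₁ * σ x) = n := by rw [← hbb, hn]
      rw [hbb, ← mul_assoc, hc, hIH, hbl, hb₁len]
      omega
    · exfalso
      have hne := cs.length_mul_simple_ne (σ₀ * b₁) x
      obtain ⟨ω₀, hω₀red, hω₀⟩ := cs.exists_reduced_word' σ₀
      have hω₀len : ω₀.length = ℓ σ₀ := by rw [← hω₀red, ← hω₀]
      set ρ := ω₀ ++ κ₁ with hρ
      have hρπ : π ρ = σ₀ * b₁ := by rw [hρ, cs.wordProd_append, ← hω₀]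
      have hρred : cs.IsReduced ρ := by
        show ℓ (π ρ) = ρ.length
        rw [hρπ, hIH]
        simp [hρ, hω₀len, hb₁len]
      have hdesc : ℓ (π ρ * σ x) < ℓ (π ρ) := by rw [hρπ]; omega
      obtain ⟨jj, hjj, hje⟩ := strong_exchange cs (cs.isReflection_simple x) ρ hdesc
      rw [hρπ] at hje
      by_cases hj : jj < ω₀.length
      · rw [hρ, List.eraseIdx_append_of_lt_length hj] at hje
        rw [cs.wordProd_append] at hje
        have h3 : π (ω₀.eraseIdx jj) * b₁ = σ₀ * b₁ * σ x := by
          rw [hb₁]; exact hje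
        have hc1 : π (ω₀.eraseIdx jj) = σ₀ * (b₁ * σ x * b₁⁻¹) := by
          calc π (ω₀.eraseIdx jj) = (π (ω₀.eraseIdx jj) * b₁) * b₁⁻¹ := by group
          _ = (σ₀ * b₁ * σ x) * b₁⁻¹ := by rw [h3]
          _ = σ₀ * (b₁ * σ x * b₁⁻¹) := by group
        have hmem : b₁ * σ x * b₁⁻¹ ∈ Subgroup.closure (cs.simple '' X) := by
          apply mul_mem (mul_mem hb₁mem _) (inv_mem hb₁mem)
          exact Subgroup.subset_closure ⟨x, hκX x (List.mem_append.mpr (Or.inr (by simp))), rfl⟩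
        have h1 := hmin _ hmem
        rw [← hc1] at h1
        have h2 : ℓ (π (ω₀.eraseIdx jj)) ≤ (ω₀.eraseIdx jj).length :=
          cs.length_wordProd_le _
        rw [List.length_eraseIdx] at h2
        rw [if_pos hj] at h2
        omega
      · push_neg at hj
        rw [hρ, List.eraseIdx_append_of_length_le hj] at hje
        rw [cs.wordProd_append] at hje
        have hc2 : π (κ₁.eraseIdx (jj - ω₀.length)) = b := by
          apply mul_left_cancel (a := σ₀)
          calc σ₀ * π (κ₁.eraseIdx (jj - ω₀.length))
              = π ω₀ * π (κ₁.eraseIdx (jj - ω₀.length)) := by rw [hω₀]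
          _ = σ₀ * b₁ * σ x := hje
          _ = σ₀ * b := by rw [hbb, mul_assoc]
        have h2 : ℓ b ≤ (κ₁.eraseIdx (jj - ω₀.length)).length := by
          rw [← hc2]; exact cs.length_wordProd_le _
        have hjlt : jj - ω₀.length < κ₁.length := by
          rw [hρ, List.length_append] at hjj
          omega
        rw [List.length_eraseIdx, if_pos hjlt] at h2
        omega
  intro b hb
  exact key (ℓ b) b hb rfl

end BruhatAux

/-- Suppose `σ` is the unique minimal element of the coset `σW₁` and `s` is a simple
reflection with `sσ < σ`.  Let `m = w ∧ sw` and `m' = w ∨ sw` be the Bruhat-smaller and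
Bruhat-larger of `w` and `sw`.  Then: (1) `sx < x` for every `x ∈ J_{σW₁}(w)`, and
`v < sv` for every `v ∈ J_{sσW₁}(w ∧ sw)`; (2) `J_{σW₁}(w) = s·J_{sσW₁}(w ∧ sw)`, and in
particular `J_{σW₁}(w) = J_{σW₁}(w ∧ sw) = J_{σW₁}(w ∨ sw)`; (3) if either `J_{σW₁}(w)`
or `J_{sσW₁}(w ∧ sw)` has a unique minimal element `u`, then so does the other, and `su`
is that unique minimal element. -/
theorem stmt_11 (cs : CoxeterSystem M W) (W₁ : Subgroup W)
    (h₁ : IsStdParabolic cs W₁) (σ w : W) (i : B)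
    (hσ : IsBrMin cs (lCoset W₁ σ) σ)
    (hsσ : BruhatLT cs (cs.simple i * σ) σ)
    (m m' : W)
    (hm : (m = w ∨ m = cs.simple i * w) ∧
      BruhatLE cs m w ∧ BruhatLE cs m (cs.simple i * w))
    (hm' : (m' = w ∨ m' = cs.simple i * w) ∧
      BruhatLE cs w m' ∧ BruhatLE cs (cs.simple i * w) m') :
    (∀ x ∈ Jset cs W₁ σ w, BruhatLT cs (cs.simple i * x) x) ∧
    (∀ v ∈ Jset cs W₁ (cs.simple i * σ) m, BruhatLT cs v (cs.simple i * v)) ∧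
    (Jset cs W₁ σ w = (fun x => cs.simple i * x) '' Jset cs W₁ (cs.simple i * σ) m) ∧
    (Jset cs W₁ σ w = Jset cs W₁ σ m ∧ Jset cs W₁ σ w = Jset cs W₁ σ m') ∧
    (∀ u : W,
      (IsBrMin cs (Jset cs W₁ σ w) u →
        IsBrMin cs (Jset cs W₁ (cs.simple i * σ) m) (cs.simple i * u)) ∧
      (IsBrMin cs (Jset cs W₁ (cs.simple i * σ) m) u →
        IsBrMin cs (Jset cs W₁ σ w) (cs.simple i * u))) := by
  classical
  obtain ⟨X, hX⟩ := h₁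
  subst hX
  set W₁ := Subgroup.closure (cs.simple '' X) with hW₁
  set s : W := cs.simple i with hs
  -- basic length facts
  have hminlen : ∀ b ∈ W₁, cs.length σ ≤ cs.length (σ * b) := by
    intro b hb
    exact BruhatAux.length_le_of_le cs (hσ.2 (σ * b) ⟨b, hb, rfl⟩)
  have hPL : ∀ b ∈ W₁, cs.length (σ * b) = cs.length σ + cs.length b :=
    BruhatAux.parabolic_length cs hminlen
  have hlsσ : cs.length (s * σ) < cs.length σ := by
    have h1 := BruhatAux.length_le_of_le cs hsσ.1
    have h2 := cs.length_simple_mul_ne σ i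
    rw [← hs] at h2
    omega
  have hdescJ : ∀ b ∈ W₁, cs.length (s * (σ * b)) < cs.length (σ * b) := by
    intro b hb
    have h1 : cs.length (s * σ * b) ≤ cs.length (s * σ) + cs.length b :=
      cs.length_mul_le _ _
    have h2 := hPL b hb
    have h3 : s * (σ * b) = s * σ * b := (mul_assoc _ _ _).symm
    rw [h3]
    omega
  have hcancel : ∀ y : W, s * (s * y) = y := fun y => cs.simple_mul_simple_cancel_left i
  have hascJ : ∀ b ∈ W₁, cs.length (s * σ * b) < cs.length (s * (s * σ * b)) := by
    intro b hb
    have he : s * (s * σ * b) = σ * b := by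
      rw [mul_assoc, hcancel]
    rw [he]
    have h4 := hdescJ b hb
    have h2 := cs.length_simple_mul_ne (σ * b) i
    rw [← hs] at h2
    have h3 : s * (σ * b) = s * σ * b := (mul_assoc _ _ _).symm
    rw [h3] at h4 h2
    omega
  -- the two length cases for m
  have hlm : (m = w ∧ cs.length w < cs.length (s * w))
      ∨ (m = s * w ∧ cs.length (s * w) < cs.length w) := by
    have hne := cs.length_simple_mul_ne w i
    rw [← hs] at hne
    rcases hm.1 with h | h
    · left
      refine ⟨h, ?_⟩
      have := BruhatAux.length_le_of_le cs hm.2.2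
      rw [h] at this
      omega
    · right
      refine ⟨h, ?_⟩
      have := BruhatAux.length_le_of_le cs hm.2.1
      rw [h] at this
      omega
  -- Part (1a)
  have part1 : ∀ x ∈ Jset cs W₁ σ w, BruhatLT cs (s * x) x := by
    rintro x ⟨⟨b, hb, rfl⟩, _⟩
    exact BruhatAux.lt_left_desc cs (hdescJ b hb)
  -- Part (1b)
  have part2 : ∀ v ∈ Jset cs W₁ (s * σ) m, BruhatLT cs v (s * v) := by
    rintro v ⟨⟨b, hb, rfl⟩, _⟩
    exact BruhatAux.lt_left_asc cs (hascJ b hb)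
  -- forward map
  have hforward : ∀ x ∈ Jset cs W₁ σ w, s * x ∈ Jset cs W₁ (s * σ) m := by
    rintro x ⟨⟨b, hb, rfl⟩, hwx⟩
    have hdesc := hdescJ b hb
    refine ⟨⟨b, hb, by rw [mul_assoc]⟩, ?_⟩
    rcases hlm with ⟨hmeq, hlen⟩ | ⟨hmeq, hlen⟩
    · rw [hmeq]
      exact (BruhatAux.L2 cs hwx hdesc).2 hlen
    · rw [hmeq]
      exact (BruhatAux.L2 cs hwx hdesc).1 hlen
  -- backward map
  have hbackward : ∀ v ∈ Jset cs W₁ (s * σ) m, s * v ∈ Jset cs W₁ σ w := by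
    rintro v ⟨⟨b, hb, hveq⟩, hmv⟩
    have hasc : cs.length v < cs.length (s * v) := by
      rw [hveq]; exact hascJ b hb
    refine ⟨⟨b, hb, by rw [hveq, mul_assoc, hcancel]⟩, ?_⟩
    rcases hlm with ⟨hmeq, hlen⟩ | ⟨hmeq, hlen⟩
    · rw [← hmeq]
      exact BruhatAux.le_trans cs hmv (BruhatAux.le_left_asc cs hasc)
    · have hwm : w = s * m := by rw [hmeq, hcancel]
      have hlm2 : cs.length m < cs.length (s * m) := by
        rw [hmeq, hcancel, ← hmeq]
        rw [hmeq]
        exact hlen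
      rw [hwm]
      exact BruhatAux.Z_le cs hmv hlm2 hasc
  -- Part (2): image equality
  have himg : Jset cs W₁ σ w = (fun x => s * x) '' Jset cs W₁ (s * σ) m := by
    ext x
    constructor
    · intro hx
      exact ⟨s * x, hforward x hx, hcancel x⟩
    · rintro ⟨v, hv, rfl⟩
      exact hbackward v hv
  -- Part (2b): J(σ,w) = J(σ,m)
  have heqm : Jset cs W₁ σ w = Jset cs W₁ σ m := by
    ext x
    constructor
    · rintro ⟨hcos, hwx⟩
      exact ⟨hcos, BruhatAux.le_trans cs hm.2.1 hwx⟩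
    · rintro ⟨⟨b, hb, rfl⟩, hmx⟩
      refine ⟨⟨b, hb, rfl⟩, ?_⟩
      rcases hlm with ⟨hmeq, _⟩ | ⟨hmeq, _⟩
      · rw [← hmeq]; exact hmx
      · have hwm : w = s * m := by rw [hmeq, hcancel]
        rw [hwm]
        exact BruhatAux.L1 cs hmx (hdescJ b hb)
  have heqm' : Jset cs W₁ σ w = Jset cs W₁ σ m' := by
    ext x
    constructor
    · rintro ⟨⟨b, hb, rfl⟩, hwx⟩
      refine ⟨⟨b, hb, rfl⟩, ?_⟩
      rcases hm'.1 with hmeq | hmeq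
      · rw [hmeq]; exact hwx
      · rw [hmeq]
        exact BruhatAux.L1 cs hwx (hdescJ b hb)
    · rintro ⟨hcos, hm'x⟩
      exact ⟨hcos, BruhatAux.le_trans cs hm'.2.1 hm'x⟩
  refine ⟨part1, part2, himg, ⟨heqm, heqm'⟩, ?_⟩
  -- Part (3)
  intro u
  constructor
  · rintro ⟨huJ, humin⟩
    refine ⟨hforward u huJ, ?_⟩
    intro v hvJ
    have h1 : BruhatLE cs u (s * v) := humin (s * v) (hbackward v hvJ)
    obtain ⟨⟨b, hb, hueq⟩, _⟩ := huJ
    have hdesc_u : cs.length (s * u) < cs.length u := by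
      rw [hueq]; exact hdescJ b hb
    obtain ⟨⟨b', hb', hveq⟩, _⟩ := hvJ
    have hdesc_sv : cs.length (s * (s * v)) < cs.length (s * v) := by
      rw [hcancel, hveq]
      exact hascJ b' hb'
    have h2 := (BruhatAux.L2 cs h1 hdesc_sv).1 hdesc_u
    rwa [hcancel] at h2
  · rintro ⟨huJ, humin⟩
    refine ⟨hbackward u huJ, ?_⟩
    intro x hxJ
    have h1 : BruhatLE cs u (s * x) := humin (s * x) (hforward x hxJ)
    obtain ⟨⟨b, hb, hueq⟩, _⟩ := huJ
    have hasc_u : cs.length u < cs.length (s * u) := by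
      rw [hueq]; exact hascJ b hb
    obtain ⟨⟨b', hb', hxeq⟩, _⟩ := hxJ
    have hdesc_x : cs.length (s * x) < cs.length x := by
      rw [hxeq]; exact hdescJ b' hb'
    have h2 : BruhatLE cs u x :=
      BruhatAux.le_trans cs h1 (BruhatAux.le_left_desc cs hdesc_x)
    exact BruhatAux.Z2_le cs h2 hasc_u hdesc_x
end

section
/- Let (W,S) be a Coxeter system, τ, φ ∈ W, and W₁, W₂ standard parabolic subgroups of W. Consider the set W₁ I(τ⁻¹) φ W₂ = { a x φ b : a ∈ W₁, x ≤ τ⁻¹, b ∈ W₂ }. Then: (1) if τ′, φ′ ∈ W satisfy τW₁ = τ′W₁ and φW₂ = φ′W₂, then W₁ I(τ′⁻¹) φ′ W₂ = W₁ I(τ⁻¹) φ W₂; and (2) the set W₁ I(τ⁻¹) φ W₂ has a unique minimal element in the Bruhat order. -/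
variable {B W : Type*} [Group W] {M : CoxeterMatrix B}

/-- The set `W₁ I(τ⁻¹) φ W₂ = { a x φ b : a ∈ W₁, x ≤ τ⁻¹, b ∈ W₂ }`. -/
def KKset (cs : CoxeterSystem M W) (W₁ W₂ : Subgroup W) (τ φ : W) : Set W :=
  {z | ∃ a ∈ W₁, ∃ x, BruhatLE cs x τ⁻¹ ∧ ∃ b ∈ W₂, z = a * x * φ * b}

namespace CoxAux

open List CoxeterSystem

attribute [local instance] Classical.propDecidable

variable (cs : CoxeterSystem M W)

local prefix:100 "σ" => cs.simple
local prefix:100 "π" => cs.wordProd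
local prefix:100 "ℓ" => cs.length

theorem rightInvSeq_cons (i : B) (ω : List B) :
    cs.rightInvSeq (i :: ω) = ((π ω)⁻¹ * σ i * π ω) :: cs.rightInvSeq ω := rfl

theorem rightInvSeq_append' (ω₁ ω₂ : List B) :
    cs.rightInvSeq (ω₁ ++ ω₂) =
      (cs.rightInvSeq ω₁).map (fun t => (π ω₂)⁻¹ * t * π ω₂) ++ cs.rightInvSeq ω₂ := by
  induction ω₁ with
  | nil => simp
  | cons i ω₁ ih =>
      rw [cons_append, rightInvSeq_cons, rightInvSeq_cons, ih, map_cons, cons_append]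
      congr 1
      rw [cs.wordProd_append]
      group

/-- The sign involution used to define the reflection cocycle. -/
noncomputable def sigmaFun (i : B) : W × ℤˣ → W × ℤˣ :=
  fun p => (σ i * p.1 * σ i, if p.1 = σ i then -p.2 else p.2)

theorem sigmaFun_involutive (i : B) : Function.Involutive (sigmaFun cs i) := by
  intro p
  obtain ⟨t, e⟩ := p
  unfold sigmaFun
  simp only []
  have h1 : σ i * t * σ i = σ i ↔ t = σ i := by
    constructor
    · intro h
      have h2 : σ i * (σ i * t * σ i) * σ i = σ i * σ i * σ i := by rw [h]
      simpa [mul_assoc, cs.simple_mul_simple_cancel_left, cs.simple_mul_simple_self] using h2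
    · intro h
      rw [h]
      simp [mul_assoc, cs.simple_mul_simple_cancel_left, cs.simple_mul_simple_self]
  by_cases h : t = σ i
  · rw [if_pos h, if_pos (h1.mpr h), h, neg_neg]
    simp [mul_assoc, cs.simple_mul_simple_cancel_left, cs.simple_mul_simple_self]
  · rw [if_neg h, if_neg (fun hc => h (h1.mp hc))]
    simp [mul_assoc, cs.simple_mul_simple_cancel_left, cs.simple_mul_simple_self]

/-- The sign permutation attached to a simple reflection. -/
noncomputable def sigmaPerm (i : B) : Equiv.Perm (W × ℤˣ) := (sigmaFun_involutive cs i).toPerm _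

theorem sigmaPerm_apply (i : B) (p : W × ℤˣ) :
    sigmaPerm cs i p = (σ i * p.1 * σ i, if p.1 = σ i then -p.2 else p.2) := rfl

theorem sigma_word (ω : List B) (t : W) (ε : ℤˣ) :
    (ω.map (sigmaPerm cs)).prod (t, ε)
      = (π ω * t * (π ω)⁻¹, (-1 : ℤˣ) ^ ((cs.rightInvSeq ω).count t) * ε) := by
  induction ω with
  | nil => simp
  | cons i ω ih =>
      rw [map_cons, prod_cons, Equiv.Perm.mul_apply, ih, sigmaPerm_apply, rightInvSeq_cons,
        count_cons, Prod.ext_iff]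
      refine ⟨?_, ?_⟩
      · simp only [cs.wordProd_cons, mul_inv_rev, cs.inv_simple]
        group
      · simp only []
        by_cases h : t = (π ω)⁻¹ * σ i * π ω
        · have hc : π ω * t * (π ω)⁻¹ = σ i := by rw [h]; group
          rw [if_pos hc]
          have hbeq : ((π ω)⁻¹ * σ i * π ω == t) = true := by
            rw [beq_iff_eq]; exact h.symm
          rw [hbeq]
          simp only [if_true, pow_succ, mul_neg, mul_one, neg_mul]
        · have hc : ¬(π ω * t * (π ω)⁻¹ = σ i) := by
            intro hcc
            apply h
            rw [← hcc]; group
          rw [if_neg hc]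
          have hbeq : ((π ω)⁻¹ * σ i * π ω == t) = false := by
            rw [beq_eq_false_iff_ne]
            exact fun hh => h hh.symm
          rw [hbeq]
          simp


theorem simple_zpow_comm (i i' : B) (p : ℤ) :
    σ i' * (σ i' * σ i) ^ p = (σ i * σ i') ^ p * σ i' := by
  have h1 : σ i' * (σ i' * σ i) * (σ i')⁻¹ = σ i * σ i' := by
    rw [cs.inv_simple, ← mul_assoc, cs.simple_mul_simple_self, one_mul]
  have h2 : σ i' * (σ i' * σ i) ^ p * (σ i')⁻¹ = (σ i * σ i') ^ p := by
    rw [← h1]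
    exact (map_zpow (MulAut.conj (σ i')) (σ i' * σ i) p).symm ▸ rfl
  have := congrArg (fun x => x * σ i') h2
  simpa [mul_assoc, cs.inv_simple, cs.simple_mul_simple_cancel_left,
    cs.simple_mul_simple_self] using this

theorem rightInvSeq_alternatingWord (i i' : B) (n : ℕ) :
    cs.rightInvSeq (alternatingWord i i' n)
      = (List.range n).map (fun k : ℕ => (σ i * σ i') ^ ((k : ℤ) + 1 - (n : ℤ)) * σ i') := by
  induction n generalizing i i' with
  | zero => simp [alternatingWord]
  | succ n ih =>
      rw [alternatingWord_succ, cs.rightInvSeq_concat, ih i' i, range_succ, map_append,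
        concat_eq_append, map_map]
      congr 1
      · apply List.map_congr_left
        intro k hk
        simp only [Function.comp_apply, MulAut.conj_apply, cs.inv_simple]
        set p : ℤ := (k : ℤ) + 1 - (n : ℤ) with hp
        have step1 : σ i' * ((σ i' * σ i) ^ p * σ i) * σ i'
            = (σ i * σ i') ^ p * (σ i' * σ i * σ i') := by
          rw [← mul_assoc, ← mul_assoc, simple_zpow_comm cs i i' p]
          group
        have step2 : σ i' * σ i * σ i' = (σ i * σ i') ^ (-1 : ℤ) * σ i' := by
          rw [zpow_neg_one, mul_inv_rev, cs.inv_simple, cs.inv_simple]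
        rw [step1, step2, ← mul_assoc, ← zpow_add]
        congr 2
        push_cast
        ring
      · simp only [map_cons, map_nil]
        congr 1
        have h0 : ((n : ℤ) + 1 - ((n : ℤ) + 1)) = 0 := by ring
        push_cast
        rw [h0, zpow_zero, one_mul]

theorem prod_sigmaPerm_alternatingWord (i i' : B) (m : ℕ) :
    ((alternatingWord i i' (2 * m)).map (sigmaPerm cs)).prod
      = (sigmaPerm cs i * sigmaPerm cs i') ^ m := by
  induction m with
  | zero => simp [alternatingWord]
  | succ m ih =>
      have h2 : 2 * (m + 1) = (2 * m) + 1 + 1 := by ring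
      have hodd : ¬ Even (2 * m + 1) := by simp [Nat.even_iff]
      have heven : Even (2 * m) := ⟨m, by ring⟩
      rw [h2, alternatingWord_succ', if_neg hodd, alternatingWord_succ', if_pos heven,
        map_cons, map_cons, prod_cons, prod_cons, ih]
      try rw [pow_succ']
      try rw [mul_assoc]

theorem sigmaPerm_liftable : M.IsLiftable (sigmaPerm cs) := by
  intro i i'
  set mm := M i i' with hmm
  rw [← prod_sigmaPerm_alternatingWord cs i i' mm]
  apply Equiv.ext
  rintro ⟨t, ε⟩
  rw [sigma_word]
  have hprod : π (alternatingWord i i' (2 * mm)) = 1 := by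
    rw [cs.prod_alternatingWord_eq_mul_pow]
    have : Even (2 * mm) := ⟨mm, by ring⟩
    rw [if_pos this, one_mul, Nat.mul_div_cancel_left _ (by norm_num : 0 < 2), hmm,
      cs.simple_mul_simple_pow]
  have hz : (σ i * σ i') ^ (mm : ℤ) = 1 := by
    rw [zpow_natCast, hmm, cs.simple_mul_simple_pow]
  have hris : cs.rightInvSeq (alternatingWord i i' (2 * mm))
      = ((List.range mm).map (fun k : ℕ => (σ i * σ i') ^ ((k : ℤ) + 1 - (2 * mm : ℤ)) * σ i'))
        ++ ((List.range mm).map (fun k : ℕ => (σ i * σ i') ^ ((k : ℤ) + 1 - (2 * mm : ℤ)) * σ i')) := by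
    rw [rightInvSeq_alternatingWord cs, two_mul, range_add, map_append, map_map]
    congr 1
    · apply List.map_congr_left
      intro k hk
      push_cast
      ring_nf
    · apply List.map_congr_left
      intro k hk
      simp only [Function.comp_apply]
      have hexp : ((mm + k : ℕ) : ℤ) + 1 - ((mm + mm : ℕ) : ℤ)
          = ((k : ℤ) + 1 - 2 * (mm : ℤ)) + (mm : ℤ) := by push_cast; ring
      rw [hexp, zpow_add, hz, mul_one]
  have hcount : Even ((cs.rightInvSeq (alternatingWord i i' (2 * mm))).count t) := by
    rw [hris, count_append]
    exact ⟨_, rfl⟩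
  rw [hprod, hcount.neg_one_pow]
  simp

/-- The reflection cocycle homomorphism. -/
noncomputable def etaHom : W →* Equiv.Perm (W × ℤˣ) := cs.lift ⟨sigmaPerm cs, sigmaPerm_liftable cs⟩

theorem etaHom_simple (i : B) : etaHom cs (σ i) = sigmaPerm cs i :=
  cs.lift_apply_simple (sigmaPerm_liftable cs) i

theorem etaHom_wordProd (ω : List B) : etaHom cs (π ω) = (ω.map (sigmaPerm cs)).prod := by
  unfold wordProd
  rw [map_list_prod (etaHom cs), map_map]
  congr 1
  apply List.map_congr_left
  intro i _
  exact etaHom_simple cs i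

/-- The sign `η(w, t)`. -/
noncomputable def eta (w t : W) : ℤˣ := ((etaHom cs w) (t, 1)).2

theorem eta_wordProd (ω : List B) (t : W) :
    eta cs (π ω) t = (-1 : ℤˣ) ^ ((cs.rightInvSeq ω).count t) := by
  rw [eta, etaHom_wordProd, sigma_word, mul_one]

theorem etaHom_apply (w t : W) (ε : ℤˣ) :
    etaHom cs w (t, ε) = (w * t * w⁻¹, eta cs w t * ε) := by
  obtain ⟨ω, rfl⟩ := cs.wordProd_surjective w
  rw [etaHom_wordProd, sigma_word, eta_wordProd]

theorem eta_mul (u v t : W) :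
    eta cs (u * v) t = eta cs v t * eta cs u (v * t * v⁻¹) := by
  have h : etaHom cs (u * v) (t, 1) = etaHom cs u (etaHom cs v (t, 1)) := by
    rw [map_mul]; rfl
  rw [etaHom_apply, etaHom_apply, etaHom_apply] at h
  have := congrArg Prod.snd h
  simp only [mul_one] at this
  rw [this, mul_comm]

theorem eta_one (t : W) : eta cs 1 t = 1 := by
  rw [eta, map_one]; rfl

theorem eta_simple (i : B) (t : W) : eta cs (σ i) t = if t = σ i then -1 else 1 := by
  have h := eta_wordProd cs [i] t
  rw [cs.wordProd_singleton] at h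
  rw [h]
  have : cs.rightInvSeq [i] = [σ i] := by simp
  rw [this]
  by_cases ht : t = σ i
  · rw [if_pos ht, ht]
    simp
  · rw [if_neg ht]
    have : count t [σ i] = 0 := by
      simp [count_cons, count_nil]
      exact fun hc => ht hc.symm
    rw [this, pow_zero]

theorem eta_inv_mul (w t : W) : eta cs w⁻¹ t * eta cs w (w⁻¹ * t * w) = 1 := by
  have h := eta_mul cs w w⁻¹ t
  rw [mul_inv_cancel, eta_one, inv_inv] at h
  exact h.symm

theorem eta_refl {t : W} (ht : cs.IsReflection t) : eta cs t t = -1 := by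
  obtain ⟨w, i, rfl⟩ := ht
  set t := w * σ i * w⁻¹ with hts
  have hsplit : t = w * (σ i * w⁻¹) := by rw [hts, mul_assoc]
  have hconj1 : (σ i * w⁻¹) * t * (σ i * w⁻¹)⁻¹ = σ i := by
    rw [hts]
    simp only [mul_inv_rev, inv_inv, cs.inv_simple]
    calc σ i * w⁻¹ * (w * σ i * w⁻¹) * (w * σ i)
        = σ i * (σ i * σ i) := by group
      _ = σ i := by rw [cs.simple_mul_simple_self, mul_one]
  have hconj2 : w⁻¹ * t * w = σ i := by
    rw [hts]
    calc w⁻¹ * (w * σ i * w⁻¹) * w = (w⁻¹ * w) * σ i * (w⁻¹ * w) := by group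
      _ = σ i := by rw [inv_mul_cancel, one_mul, mul_one]
  have h1 : eta cs t t = eta cs (σ i * w⁻¹) t * eta cs w (σ i) := by
    nth_rw 1 [hsplit]
    rw [eta_mul, hconj1]
  have h2 : eta cs (σ i * w⁻¹) t = eta cs w⁻¹ t * eta cs (σ i) (σ i) := by
    rw [eta_mul, inv_inv, hconj2]
  have h3 : eta cs (σ i) (σ i) = -1 := by rw [eta_simple, if_pos rfl]
  have h4 : eta cs w⁻¹ t * eta cs w (σ i) = 1 := by
    have := eta_inv_mul cs w t
    rwa [hconj2] at this
  rw [h1, h2, h3]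
  rw [mul_right_comm, h4, one_mul]

theorem length_lt_of_eta_neg_one {w t : W} (ht : cs.IsReflection t)
    (h : eta cs w t = -1) : ℓ (w * t) < ℓ w := by
  obtain ⟨ω, hred, rfl⟩ := cs.exists_reduced_word' w
  rw [eta_wordProd] at h
  have hodd : Odd ((cs.rightInvSeq ω).count t) := by
    rcases Nat.even_or_odd ((cs.rightInvSeq ω).count t) with he | ho
    · rw [he.neg_one_pow] at h
      exact absurd h (by decide)
    · exact ho
  have hmem : t ∈ cs.rightInvSeq ω := by
    rw [← count_pos_iff]
    rcases hodd with ⟨c, hc⟩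
    omega
  exact (cs.isRightInversion_of_mem_rightInvSeq hred hmem).2

theorem eta_neg_one_of_length_lt {w t : W} (ht : cs.IsReflection t)
    (h : ℓ (w * t) < ℓ w) : eta cs w t = -1 := by
  by_contra hc
  have h1 : eta cs w t = 1 := by
    rcases Int.units_eq_one_or (eta cs w t) with h' | h'
    · exact h'
    · exact absurd h' hc
  have h2 : eta cs (w * t) t = -1 := by
    rw [eta_mul]
    have htt : t * t * t⁻¹ = t := by rw [ht.mul_self, one_mul, ht.inv]
    rw [htt, h1, mul_one, eta_refl cs ht]
  have h3 := length_lt_of_eta_neg_one cs ht h2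
  rw [mul_assoc, ht.mul_self, mul_one] at h3
  omega

theorem strong_exchange_right {ω : List B} {t : W} (ht : cs.IsReflection t)
    (hlt : ℓ (π ω * t) < ℓ (π ω)) :
    ∃ j < ω.length, π ω * t = π (ω.eraseIdx j) := by
  have heta := eta_neg_one_of_length_lt cs ht hlt
  rw [eta_wordProd] at heta
  have hmem : t ∈ cs.rightInvSeq ω := by
    rw [← count_pos_iff]
    rcases Nat.even_or_odd ((cs.rightInvSeq ω).count t) with he | ho
    · rw [he.neg_one_pow] at heta
      exact absurd heta (by decide)
    · rcases ho with ⟨c, hc⟩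
      omega
  obtain ⟨j, hj, hjt⟩ := List.mem_iff_getElem.mp hmem
  rw [cs.length_rightInvSeq] at hj
  refine ⟨j, hj, ?_⟩
  rw [← cs.wordProd_mul_getD_rightInvSeq ω j]
  congr 1
  rw [List.getD_eq_getElem _ _ (by rwa [cs.length_rightInvSeq])]
  exact hjt.symm


/-! ### Deletion property -/

theorem exists_reduced_sublist_aux :
    ∀ n : ℕ, ∀ ω : List B, ω.length ≤ n → ∃ ω', ω' <+ ω ∧ cs.IsReduced ω' ∧ π ω' = π ω := by
  intro n
  induction n with
  | zero =>
      intro ω hω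
      have : ω = [] := List.eq_nil_of_length_eq_zero (Nat.le_zero.mp hω)
      subst this
      exact ⟨[], Sublist.refl _, by simp [CoxeterSystem.IsReduced], rfl⟩
  | succ n ih =>
      intro ω hω
      by_cases hred : cs.IsReduced ω
      · exact ⟨ω, Sublist.refl ω, hred, rfl⟩
      · have hk : ∃ k, k < ω.length ∧ ℓ (π (ω.take (k+1))) < ℓ (π (ω.take k)) + 1 := by
          by_contra hcon
          push_neg at hcon
          have hstep : ∀ k, k < ω.length → ℓ (π (ω.take (k+1))) = ℓ (π (ω.take k)) + 1 := by
            intro k hk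
            have h1 := hcon k hk
            have h2 : ω.take (k+1) = ω.take k ++ [ω[k]] := by
              rw [take_succ, getElem?_eq_getElem hk]
              rfl
            have h3 : π (ω.take (k+1)) = π (ω.take k) * σ ω[k] := by
              rw [h2, cs.wordProd_append, cs.wordProd_singleton]
            rcases cs.length_mul_simple (π (ω.take k)) ω[k] with h4 | h4 <;>
              rw [h3] at h1 ⊢ <;> omega
          have hlen : ∀ k, k ≤ ω.length → ℓ (π (ω.take k)) = k := by
            intro k
            induction k with
            | zero => intro _; simp
            | succ k ihk =>
                intro hk
                rw [hstep k (by omega), ihk (by omega)]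
          have : cs.IsReduced ω := by
            have := hlen ω.length (le_refl _)
            rwa [take_length] at this
          exact hred this
        obtain ⟨k, hk, hlt⟩ := hk
        have h2 : ω.take (k+1) = ω.take k ++ [ω[k]] := by
          rw [take_succ, getElem?_eq_getElem hk]
          rfl
        have h3 : π (ω.take (k+1)) = π (ω.take k) * σ ω[k] := by
          rw [h2, cs.wordProd_append, cs.wordProd_singleton]
        have hlt2 : ℓ (π (ω.take k) * σ ω[k]) < ℓ (π (ω.take k)) := by
          rcases cs.length_mul_simple (π (ω.take k)) ω[k] with h4 | h4 <;>
            rw [h3] at hlt <;> omega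
        obtain ⟨j, hj, hex⟩ := strong_exchange_right cs (cs.isReflection_simple ω[k]) hlt2
        set ω₂ := (ω.take k).eraseIdx j ++ ω.drop (k+1) with hω₂
        have hsub : ω₂ <+ ω := by
          have hd : ω.drop k = ω[k] :: ω.drop (k+1) := List.drop_eq_getElem_cons hk
          have : ω₂ <+ ω.take k ++ ω.drop k := by
            rw [hd]
            exact Sublist.append (eraseIdx_sublist _ j) (sublist_cons_self _ _)
          rwa [take_append_drop] at this
        have hprod : π ω₂ = π ω := by
          have h5 : π ω = π (ω.take (k+1)) * π (ω.drop (k+1)) := by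
            rw [← cs.wordProd_append, take_append_drop]
          rw [hω₂, cs.wordProd_append, ← hex, ← h3, ← h5]
        have hlen2 : ω₂.length ≤ n := by
          have e1 : (ω.take k).length = k := by
            rw [length_take]
            omega
          have e2 := List.length_eraseIdx_add_one hj
          have e3 : (ω.drop (k+1)).length = ω.length - (k+1) := by rw [length_drop]
          rw [hω₂, length_append, e3]
          rw [e1] at hj
          omega
        obtain ⟨ω', h1', h2', h3'⟩ := ih ω₂ hlen2
        exact ⟨ω', h1'.trans hsub, h2', by rw [h3', hprod]⟩

theorem exists_reduced_sublist (ω : List B) :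
    ∃ ω', ω' <+ ω ∧ cs.IsReduced ω' ∧ π ω' = π ω :=
  exists_reduced_sublist_aux cs ω.length ω (le_refl _)


/-! ### The chain (reflection) order -/

/-- One step of the Bruhat order: multiply by a reflection on the right, increasing length. -/
def BStep (x y : W) : Prop := ∃ t, cs.IsReflection t ∧ y = x * t ∧ ℓ x < ℓ y

/-- The Bruhat order, defined via chains of reflections. -/
def le' (x y : W) : Prop := Relation.ReflTransGen (BStep cs) x y

theorem le'_refl (x : W) : le' cs x x := Relation.ReflTransGen.refl

theorem le'_trans {x y z : W} (h1 : le' cs x y) (h2 : le' cs y z) : le' cs x z :=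
  Relation.ReflTransGen.trans h1 h2

theorem le'_of_bstep {x y : W} (h : BStep cs x y) : le' cs x y :=
  Relation.ReflTransGen.single h

theorem le'_step_left {x y t : W} (ht : cs.IsReflection t) (hy : y = t * x)
    (hlt : ℓ x < ℓ y) : le' cs x y := by
  apply le'_of_bstep
  refine ⟨x⁻¹ * t * x, ?_, ?_, hlt⟩
  · have := ht.conj x⁻¹
    rwa [inv_inv] at this
  · rw [hy]
    group

theorem le'_simple_mul {x : W} {i : B} (h : ℓ x < ℓ (σ i * x)) : le' cs x (σ i * x) :=
  le'_step_left cs (cs.isReflection_simple i) rfl h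

theorem simple_mul_le' {x : W} {i : B} (h : ℓ (σ i * x) < ℓ x) : le' cs (σ i * x) x := by
  apply le'_step_left cs (cs.isReflection_simple i) _ h
  rw [← mul_assoc, cs.simple_mul_simple_self, one_mul]

/-- Subword property: a chain-below element appears as a reduced sublist of every
reduced word. -/
theorem le'_subword {u v : W} (h : le' cs u v) :
    ∀ α, cs.IsReduced α → π α = v → ∃ α', α' <+ α ∧ cs.IsReduced α' ∧ π α' = u := by
  induction h using Relation.ReflTransGen.head_induction_on with
  | refl => exact fun α h1 h2 => ⟨α, Sublist.refl _, h1, h2⟩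
  | head hstep _ ih =>
      rename_i a c _
      intro α h1 h2
      obtain ⟨α', hsub, hred, hprod⟩ := ih α h1 h2
      obtain ⟨t, ht, hy, hlt⟩ := hstep
      have hu : π α' * t = a := by
        rw [hprod, hy, mul_assoc, ht.mul_self, mul_one]
      have hlt2 : ℓ (π α' * t) < ℓ (π α') := by
        rw [hu, hprod]
        exact hlt
      obtain ⟨j, hj, hex⟩ := strong_exchange_right cs ht hlt2
      obtain ⟨α'', h1', h2', h3'⟩ := exists_reduced_sublist cs (α'.eraseIdx j)
      exact ⟨α'', h1'.trans ((eraseIdx_sublist α' j).trans hsub), h2',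
        by rw [h3', ← hex, hu]⟩

/-- Property Z: one-step version. -/
theorem z2_step {x y : W} (h : BStep cs x y) (i : B) :
    le' cs (σ i * x) y ∨ le' cs (σ i * x) (σ i * y) := by
  obtain ⟨t, ht, rfl, hlt⟩ := h
  rcases Nat.lt_or_ge (ℓ (σ i * x)) (ℓ x) with hA | hA'
  · left
    exact le'_trans cs (simple_mul_le' cs hA) (le'_of_bstep cs ⟨t, ht, rfl, hlt⟩)
  · have hA : ℓ x < ℓ (σ i * x) :=
      lt_of_le_of_ne hA' (Ne.symm (cs.length_simple_mul_ne x i))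
    have hne2 : ℓ (σ i * (x * t)) ≠ ℓ (σ i * x) := by
      rw [← mul_assoc]
      exact ht.length_mul_left_ne (σ i * x)
    rcases Nat.lt_or_ge (ℓ (σ i * x)) (ℓ (σ i * (x * t))) with hB | hB'
    · right
      exact le'_of_bstep cs ⟨t, ht, by rw [mul_assoc], hB⟩
    · have hB : ℓ (σ i * (x * t)) < ℓ (σ i * x) := lt_of_le_of_ne hB' hne2
      have he1 : eta cs (σ i * x) t = -1 := by
        apply eta_neg_one_of_length_lt cs ht
        rwa [mul_assoc]
      have he2 : eta cs x t = 1 := by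
        rcases Int.units_eq_one_or (eta cs x t) with h' | h'
        · exact h'
        · exfalso
          have := length_lt_of_eta_neg_one cs ht h'
          omega
      have he3 := eta_mul cs (σ i) x t
      rw [he2, one_mul] at he3
      rw [he3] at he1
      have he4 := eta_simple cs i (x * t * x⁻¹)
      by_cases hcond : x * t * x⁻¹ = σ i
      · have hxy : σ i * x = x * t := by
          rw [← hcond]
          group
        left
        rw [hxy]
        exact le'_refl cs _
      · rw [if_neg hcond] at he4
        rw [he4] at he1
        exact absurd he1 (by decide)

/-- Property Z for chains. -/
theorem z2 {x y : W} (h : le' cs x y) (i : B) :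
    le' cs (σ i * x) y ∨ le' cs (σ i * x) (σ i * y) := by
  induction h with
  | refl => right; exact le'_refl cs _
  | tail _ hstep ih =>
      rcases ih with h1 | h2
      · left; exact le'_trans cs h1 (le'_of_bstep cs hstep)
      · rcases z2_step cs hstep i with h3 | h4
        · left; exact le'_trans cs h2 h3
        · right; exact le'_trans cs h2 h4

theorem le'_of_sublist : ∀ ω : List B, cs.IsReduced ω → ∀ ω', ω' <+ ω →
    le' cs (π ω') (π ω) := by
  intro ω
  induction ω with
  | nil =>
      intro _ ω' h
      rw [sublist_nil.mp h]
      exact le'_refl cs _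
  | cons i ω₀ ih =>
      intro hred ω' hsub
      have hred₀ : cs.IsReduced ω₀ := by
        have := hred.drop 1
        simpa using this
      have hlen : ℓ (π ω₀) < ℓ (σ i * π ω₀) := by
        have h1 : ℓ (π (i :: ω₀)) = ω₀.length + 1 := by
          rw [hred]
          simp
        rw [cs.wordProd_cons] at h1
        have h2 : ℓ (π ω₀) = ω₀.length := hred₀
        omega
      have hstep : le' cs (π ω₀) (π (i :: ω₀)) := by
        rw [cs.wordProd_cons]
        exact le'_simple_mul cs hlen
      rcases sublist_cons_iff.mp hsub with h | ⟨ω₁, rfl, h₁⟩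
      · exact le'_trans cs (ih hred₀ ω' h) hstep
      · rw [cs.wordProd_cons, cs.wordProd_cons]
        rcases z2 cs (ih hred₀ ω₁ h₁) i with h2 | h2
        · exact le'_trans cs h2 (le'_simple_mul cs hlen)
        · exact h2

/-! ### Equivalence of the two definitions -/

theorem bruhatLE_iff_le' {u v : W} : BruhatLE cs u v ↔ le' cs u v := by
  constructor
  · rintro ⟨ω, hred, rfl, ω', hsub, rfl⟩
    exact le'_of_sublist cs ω hred ω' hsub
  · intro h
    obtain ⟨α, hred, rfl⟩ := cs.exists_reduced_word' v
    obtain ⟨α', h1, h2, h3⟩ := le'_subword cs h α hred rfl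
    exact ⟨α, hred, rfl, α', h1, h3⟩

theorem bruhatLE_refl (u : W) : BruhatLE cs u u :=
  (bruhatLE_iff_le' cs).mpr (le'_refl cs u)

theorem bruhatLE_trans {u v w : W} (h1 : BruhatLE cs u v) (h2 : BruhatLE cs v w) :
    BruhatLE cs u w :=
  (bruhatLE_iff_le' cs).mpr (le'_trans cs ((bruhatLE_iff_le' cs).mp h1)
    ((bruhatLE_iff_le' cs).mp h2))

theorem bruhatLE_of_sublist {ω ω' : List B} (hred : cs.IsReduced ω) (h : ω' <+ ω) :
    BruhatLE cs (π ω') (π ω) :=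
  ⟨ω, hred, rfl, ω', h, rfl⟩

/-- The subword property: `u ≤ v` iff every reduced word for `v` contains a reduced
sublist representing `u`. -/
theorem bruhatLE_subword {u v : W} (h : BruhatLE cs u v) {α : List B}
    (hred : cs.IsReduced α) (hp : π α = v) :
    ∃ α', α' <+ α ∧ cs.IsReduced α' ∧ π α' = u :=
  le'_subword cs ((bruhatLE_iff_le' cs).mp h) α hred hp

theorem one_bruhatLE (u : W) : BruhatLE cs 1 u := by
  obtain ⟨α, hred, rfl⟩ := cs.exists_reduced_word' u
  have := bruhatLE_of_sublist cs hred (nil_sublist α)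
  rwa [cs.wordProd_nil] at this

theorem bruhatLE_inv {u v : W} (h : BruhatLE cs u v) : BruhatLE cs u⁻¹ v⁻¹ := by
  obtain ⟨ω, hred, rfl, ω', hsub, rfl⟩ := h
  refine ⟨ω.reverse, (cs.isReduced_reverse_iff ω).mpr hred, cs.wordProd_reverse ω,
    ω'.reverse, hsub.reverse, cs.wordProd_reverse ω'⟩

/-! ### Lifting lemmas -/

theorem bruhatLE_simple_mul {v : W} {i : B} (h : ℓ v < ℓ (σ i * v)) :
    BruhatLE cs v (σ i * v) :=
  (bruhatLE_iff_le' cs).mpr (le'_simple_mul cs h)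

theorem simple_mul_bruhatLE {v : W} {i : B} (h : ℓ (σ i * v) < ℓ v) :
    BruhatLE cs (σ i * v) v :=
  (bruhatLE_iff_le' cs).mpr (simple_mul_le' cs h)

theorem bruhatLE_mul_simple {v : W} {i : B} (h : ℓ v < ℓ (v * σ i)) :
    BruhatLE cs v (v * σ i) := by
  have h' : ℓ v⁻¹ < ℓ (σ i * v⁻¹) := by
    have : σ i * v⁻¹ = (v * σ i)⁻¹ := by rw [mul_inv_rev, cs.inv_simple]
    rw [this, cs.length_inv, cs.length_inv]
    exact h
  have := bruhatLE_inv cs (bruhatLE_simple_mul cs h')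
  rwa [inv_inv, mul_inv_rev, cs.inv_simple, inv_inv] at this

theorem mul_simple_bruhatLE {v : W} {i : B} (h : ℓ (v * σ i) < ℓ v) :
    BruhatLE cs (v * σ i) v := by
  have h' : ℓ (σ i * v⁻¹) < ℓ v⁻¹ := by
    have : σ i * v⁻¹ = (v * σ i)⁻¹ := by rw [mul_inv_rev, cs.inv_simple]
    rw [this, cs.length_inv, cs.length_inv]
    exact h
  have := bruhatLE_inv cs (simple_mul_bruhatLE cs h')
  rwa [mul_inv_rev, cs.inv_simple, inv_inv] at this

/-- Co-lifting: if `σ i * v` is longer than `v` and `u ≤ σ i * v`, then `u ≤ v` or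
`σ i * u ≤ v`. -/
theorem coL {u v : W} {i : B} (h : ℓ v < ℓ (σ i * v)) (hu : BruhatLE cs u (σ i * v)) :
    BruhatLE cs u v ∨ BruhatLE cs (σ i * u) v := by
  obtain ⟨ω, hred, rfl⟩ := cs.exists_reduced_word' v
  have hredi : cs.IsReduced (i :: ω) := by
    show ℓ (π (i :: ω)) = (i :: ω).length
    rw [cs.wordProd_cons]
    have h1 : ℓ (σ i * π ω) = ℓ (π ω) + 1 := by
      rcases cs.length_simple_mul (π ω) i with h2 | h2 <;> omega
    rw [h1, hred]
    simp
  have hprodi : π (i :: ω) = σ i * π ω := cs.wordProd_cons i ω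
  obtain ⟨α', h1, h2, h3⟩ := bruhatLE_subword cs hu hredi hprodi
  rcases sublist_cons_iff.mp h1 with hcase | ⟨ω₁, rfl, hω₁⟩
  · left
    rw [← h3]
    exact bruhatLE_of_sublist cs hred hcase
  · right
    rw [← h3, cs.wordProd_cons, ← mul_assoc, cs.simple_mul_simple_self, one_mul]
    exact bruhatLE_of_sublist cs hred hω₁

/-- Lifting: if `σ i * v < v`, `u ≤ v` and `σ i * u > u`, then `u ≤ σ i * v`. -/
theorem lifting {u v : W} {i : B} (hv : ℓ (σ i * v) < ℓ v) (huv : BruhatLE cs u v)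
    (hu : ℓ u < ℓ (σ i * u)) : BruhatLE cs u (σ i * v) := by
  have hv' : ℓ (σ i * v) < ℓ (σ i * (σ i * v)) := by
    rwa [← mul_assoc, cs.simple_mul_simple_self, one_mul]
  have huv' : BruhatLE cs u (σ i * (σ i * v)) := by
    rwa [← mul_assoc, cs.simple_mul_simple_self, one_mul]
  rcases coL cs hv' huv' with h | h
  · exact h
  · exact bruhatLE_trans cs (bruhatLE_simple_mul cs hu) h

/-- Monotonicity of the `min` with a simple reflection. -/
theorem min_lifting {u v : W} (i : B) (huv : BruhatLE cs u v) :
    BruhatLE cs (if ℓ (σ i * u) < ℓ u then σ i * u else u) (σ i * v) := by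
  set u' := if ℓ (σ i * u) < ℓ u then σ i * u else u with hu'
  have hu'le : BruhatLE cs u' u := by
    rw [hu']
    split
    · exact simple_mul_bruhatLE cs (by assumption)
    · exact bruhatLE_refl cs u
  rcases Nat.lt_or_ge (ℓ (σ i * v)) (ℓ v) with hv | hv'
  · have hv2 : ℓ (σ i * v) < ℓ (σ i * (σ i * v)) := by
      rwa [← mul_assoc, cs.simple_mul_simple_self, one_mul]
    have huv' : BruhatLE cs u (σ i * (σ i * v)) := by
      rwa [← mul_assoc, cs.simple_mul_simple_self, one_mul]
    rcases coL cs hv2 huv' with h | h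
    · exact bruhatLE_trans cs hu'le h
    · rw [hu']
      split
      · exact h
      · rename_i hcase
        push_neg at hcase
        have hne := cs.length_simple_mul_ne u i
        have hlt : ℓ u < ℓ (σ i * u) := lt_of_le_of_ne hcase (Ne.symm hne)
        exact bruhatLE_trans cs (bruhatLE_simple_mul cs hlt) h
  · have hv : ℓ v < ℓ (σ i * v) :=
      lt_of_le_of_ne hv' (Ne.symm (cs.length_simple_mul_ne v i))
    exact bruhatLE_trans cs hu'le (bruhatLE_trans cs huv (bruhatLE_simple_mul cs hv))


/-! ### Parabolic subgroups: words -/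

theorem exists_word_of_mem_closure {X : Set B} {a : W}
    (ha : a ∈ Subgroup.closure (cs.simple '' X)) :
    ∃ ω : List B, (∀ i ∈ ω, i ∈ X) ∧ π ω = a := by
  induction ha using Subgroup.closure_induction with
  | mem g hg =>
      obtain ⟨i, hi, rfl⟩ := hg
      exact ⟨[i], by simpa using hi, by simp⟩
  | one => exact ⟨[], by simp, by simp⟩
  | mul g g' _ _ ihg ihg' =>
      obtain ⟨ω, h1, h2⟩ := ihg
      obtain ⟨ω', h1', h2'⟩ := ihg'
      refine ⟨ω ++ ω', ?_, by rw [cs.wordProd_append, h2, h2']⟩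
      intro i hi
      rcases mem_append.mp hi with h | h
      · exact h1 i h
      · exact h1' i h
  | inv g _ ihg =>
      obtain ⟨ω, h1, h2⟩ := ihg
      exact ⟨ω.reverse, fun i hi => h1 i (mem_reverse.mp hi),
        by rw [cs.wordProd_reverse, h2]⟩

theorem simple_mem_closure {X : Set B} {i : B} (hi : i ∈ X) :
    σ i ∈ Subgroup.closure (cs.simple '' X) :=
  Subgroup.subset_closure ⟨i, hi, rfl⟩

/-! ### Part 1 -/

/-- An auxiliary reformulation of `KKset`. -/
def Sset (W₁ W₂ : Subgroup W) (φ σ0 : W) : Set W :=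
  {z | ∃ a ∈ W₁, ∃ x, BruhatLE cs x σ0 ∧ ∃ b ∈ W₂, z = a * x * φ * b}

theorem KKset_eq_Sset (W₁ W₂ : Subgroup W) (τ φ : W) :
    KKset cs W₁ W₂ τ φ = Sset cs W₁ W₂ φ τ⁻¹ := rfl

theorem Sset_simple_subset {X₁ : Set B} (W₂ : Subgroup W) (φ : W) {i : B} (hi : i ∈ X₁)
    (σ0 : W) :
    Sset cs (Subgroup.closure (cs.simple '' X₁)) W₂ φ (σ i * σ0)
      ⊆ Sset cs (Subgroup.closure (cs.simple '' X₁)) W₂ φ σ0 := by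
  rintro z ⟨a, ha, x, hx, b, hb, rfl⟩
  rcases Nat.lt_or_ge (ℓ (σ i * σ0)) (ℓ σ0) with hlt | hge
  · exact ⟨a, ha, x, bruhatLE_trans cs hx (simple_mul_bruhatLE cs hlt), b, hb, rfl⟩
  · have hgt : ℓ σ0 < ℓ (σ i * σ0) :=
      lt_of_le_of_ne hge (Ne.symm (cs.length_simple_mul_ne σ0 i))
    rcases coL cs hgt hx with h | h
    · exact ⟨a, ha, x, h, b, hb, rfl⟩
    · refine ⟨a * σ i, mul_mem ha (simple_mem_closure cs hi), σ i * x, h, b, hb, ?_⟩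
      have : a * σ i * (σ i * x) = a * x := by
        rw [mul_assoc, cs.simple_mul_simple_cancel_left]
      rw [this]

theorem Sset_simple_eq {X₁ : Set B} (W₂ : Subgroup W) (φ : W) {i : B} (hi : i ∈ X₁)
    (σ0 : W) :
    Sset cs (Subgroup.closure (cs.simple '' X₁)) W₂ φ (σ i * σ0)
      = Sset cs (Subgroup.closure (cs.simple '' X₁)) W₂ φ σ0 := by
  apply subset_antisymm
  · exact Sset_simple_subset cs W₂ φ hi σ0
  · have := Sset_simple_subset cs W₂ φ hi (σ i * σ0)
    rwa [← mul_assoc, cs.simple_mul_simple_self, one_mul] at this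

theorem Sset_word_eq {X₁ : Set B} (W₂ : Subgroup W) (φ : W) :
    ∀ ω : List B, (∀ i ∈ ω, i ∈ X₁) → ∀ σ0 : W,
    Sset cs (Subgroup.closure (cs.simple '' X₁)) W₂ φ (π ω * σ0)
      = Sset cs (Subgroup.closure (cs.simple '' X₁)) W₂ φ σ0 := by
  intro ω
  induction ω with
  | nil =>
      intro _ σ0
      rw [cs.wordProd_nil, one_mul]
  | cons i ω₀ ih =>
      intro hX σ0
      have h1 : π (i :: ω₀) * σ0 = σ i * (π ω₀ * σ0) := by
        rw [cs.wordProd_cons, mul_assoc]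
      rw [h1, Sset_simple_eq cs W₂ φ (hX i mem_cons_self) (π ω₀ * σ0),
        ih (fun j hj => hX j (mem_cons_of_mem i hj)) σ0]

theorem KKset_phi_invariant (W₁ W₂ : Subgroup W) (τ : W) {φ φ' : W}
    (hφ : φ⁻¹ * φ' ∈ W₂) :
    KKset cs W₁ W₂ τ φ' = KKset cs W₁ W₂ τ φ := by
  ext z
  constructor
  · rintro ⟨a, ha, x, hx, b, hb, rfl⟩
    refine ⟨a, ha, x, hx, (φ⁻¹ * φ') * b, mul_mem hφ hb, by group⟩
  · rintro ⟨a, ha, x, hx, b, hb, rfl⟩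
    refine ⟨a, ha, x, hx, (φ'⁻¹ * φ) * b, mul_mem (by simpa using inv_mem hφ) hb, by group⟩

theorem KKset_tau_invariant {X₁ : Set B} (W₂ : Subgroup W) (φ : W) {τ τ' : W}
    (hτ : τ⁻¹ * τ' ∈ Subgroup.closure (cs.simple '' X₁)) :
    KKset cs (Subgroup.closure (cs.simple '' X₁)) W₂ τ' φ
      = KKset cs (Subgroup.closure (cs.simple '' X₁)) W₂ τ φ := by
  obtain ⟨ω, hX, hπ⟩ := exists_word_of_mem_closure cs (inv_mem hτ)
  have hτ'inv : τ'⁻¹ = π ω * τ⁻¹ := by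
    rw [hπ]
    group
  rw [KKset_eq_Sset, KKset_eq_Sset, hτ'inv, Sset_word_eq cs W₂ φ ω hX τ⁻¹]

/-! ### Part 2 -/

theorem interval_min (φ : W) : ∀ ω : List B, cs.IsReduced ω →
    ∃ m₁, (∃ ω', ω' <+ ω ∧ π ω' * φ = m₁) ∧
      (∀ ω'', ω'' <+ ω → BruhatLE cs m₁ (π ω'' * φ)) := by
  intro ω
  induction ω with
  | nil =>
      intro _
      refine ⟨φ, ⟨[], Sublist.refl _, by simp⟩, ?_⟩
      intro ω'' h
      rw [sublist_nil.mp h]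
      simpa using bruhatLE_refl cs φ
  | cons i ω₀ ih =>
      intro hred
      have hred₀ : cs.IsReduced ω₀ := by
        have := hred.drop 1
        simpa using this
      obtain ⟨m₀, ⟨ω', hsub, hm⟩, hbound⟩ := ih hred₀
      refine ⟨if ℓ (σ i * m₀) < ℓ m₀ then σ i * m₀ else m₀, ?_, ?_⟩
      · split
        · exact ⟨i :: ω', hsub.cons₂ i, by rw [cs.wordProd_cons, mul_assoc, hm]⟩
        · exact ⟨ω', hsub.cons i, hm⟩
      · intro ω'' h
        rcases sublist_cons_iff.mp h with hc | ⟨ω₁, rfl, h₁⟩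
        · refine bruhatLE_trans cs ?_ (hbound ω'' hc)
          split
          · exact simple_mul_bruhatLE cs (by assumption)
          · exact bruhatLE_refl cs m₀
        · have := min_lifting cs i (hbound ω₁ h₁)
          rw [cs.wordProd_cons, mul_assoc]
          exact this

theorem exists_reduced_rep (X₁ X₂ : Set B) : ∀ n : ℕ, ∀ u : W, ℓ u ≤ n →
    ∃ w a b, a ∈ Subgroup.closure (cs.simple '' X₁) ∧ b ∈ Subgroup.closure (cs.simple '' X₂) ∧
      w = a * u * b ∧ BruhatLE cs w u ∧
      (∀ i ∈ X₁, ℓ w < ℓ (σ i * w)) ∧ (∀ i ∈ X₂, ℓ w < ℓ (w * σ i)) := by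
  intro n
  induction n with
  | zero =>
      intro u hu
      have hu1 : u = 1 := cs.length_eq_zero_iff.mp (Nat.le_zero.mp hu)
      refine ⟨u, 1, 1, one_mem _, one_mem _, by rw [one_mul, mul_one], bruhatLE_refl cs u,
        ?_, ?_⟩
      · intro i _
        have := cs.length_simple_mul_ne u i
        omega
      · intro i _
        have := cs.length_mul_simple_ne u i
        omega
  | succ n ih =>
      intro u hu
      by_cases h1 : ∃ i ∈ X₁, ℓ (σ i * u) < ℓ u
      · obtain ⟨i, hi, hd⟩ := h1
        obtain ⟨w, a, b, ha, hb, hw, hwle, hnd1, hnd2⟩ := ih (σ i * u) (by omega)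
        refine ⟨w, a * σ i, b, mul_mem ha (simple_mem_closure cs hi), hb, ?_,
          bruhatLE_trans cs hwle (simple_mul_bruhatLE cs hd), hnd1, hnd2⟩
        rw [hw]
        group
      · by_cases h2 : ∃ i ∈ X₂, ℓ (u * σ i) < ℓ u
        · obtain ⟨i, hi, hd⟩ := h2
          obtain ⟨w, a, b, ha, hb, hw, hwle, hnd1, hnd2⟩ := ih (u * σ i) (by omega)
          refine ⟨w, a, σ i * b, ha, mul_mem (simple_mem_closure cs hi) hb, ?_,
            bruhatLE_trans cs hwle (mul_simple_bruhatLE cs hd), hnd1, hnd2⟩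
          rw [hw]
          group
        · push_neg at h1 h2
          refine ⟨u, 1, 1, one_mem _, one_mem _, by rw [one_mul, mul_one],
            bruhatLE_refl cs u, ?_, ?_⟩
          · intro i hi
            have := cs.length_simple_mul_ne u i
            have := h1 i hi
            omega
          · intro i hi
            have := cs.length_mul_simple_ne u i
            have := h2 i hi
            omega

theorem noLeftDescent_le_mul {X₁ : Set B} {w : W} (hw : ∀ i ∈ X₁, ℓ w < ℓ (σ i * w)) :
    ∀ ω : List B, (∀ i ∈ ω, i ∈ X₁) → ∀ v : W, BruhatLE cs w v →
      BruhatLE cs w (π ω * v) := by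
  intro ω
  induction ω with
  | nil =>
      intro _ v hwv
      rwa [cs.wordProd_nil, one_mul]
  | cons i ω₀ ih =>
      intro hX v hwv
      have h1 : BruhatLE cs w (π ω₀ * v) :=
        ih (fun j hj => hX j (mem_cons_of_mem i hj)) v hwv
      rw [cs.wordProd_cons, mul_assoc]
      rcases Nat.lt_or_ge (ℓ (σ i * (π ω₀ * v))) (ℓ (π ω₀ * v)) with hlt | hge
      · exact lifting cs hlt h1 (hw i (hX i mem_cons_self))
      · have hgt : ℓ (π ω₀ * v) < ℓ (σ i * (π ω₀ * v)) :=
          lt_of_le_of_ne hge (Ne.symm (cs.length_simple_mul_ne (π ω₀ * v) i))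
        exact bruhatLE_trans cs h1 (bruhatLE_simple_mul cs hgt)

theorem noRightDescent_le_mul {X₂ : Set B} {w : W} (hw : ∀ i ∈ X₂, ℓ w < ℓ (w * σ i)) :
    ∀ ω : List B, (∀ i ∈ ω, i ∈ X₂) → ∀ v : W, BruhatLE cs w v →
      BruhatLE cs w (v * π ω) := by
  intro ω hX v hwv
  have hw' : ∀ i ∈ X₂, ℓ w⁻¹ < ℓ (σ i * w⁻¹) := by
    intro i hi
    have : σ i * w⁻¹ = (w * σ i)⁻¹ := by rw [mul_inv_rev, cs.inv_simple]
    rw [this, cs.length_inv, cs.length_inv]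
    exact hw i hi
  have := noLeftDescent_le_mul cs hw' ω.reverse (fun i hi => hX i (mem_reverse.mp hi))
    v⁻¹ (bruhatLE_inv cs hwv)
  have h2 := bruhatLE_inv cs this
  rwa [inv_inv, mul_inv_rev, cs.wordProd_reverse, inv_inv, inv_inv] at h2

theorem KKset_isBrMin {X₁ X₂ : Set B} (τ φ : W) :
    ∃ m, IsBrMin cs (KKset cs (Subgroup.closure (cs.simple '' X₁))
      (Subgroup.closure (cs.simple '' X₂)) τ φ) m := by
  obtain ⟨ωσ, hredσ, hπσ⟩ := cs.exists_reduced_word' τ⁻¹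
  obtain ⟨m₁, ⟨ω', hsub', hm₁⟩, hb₁⟩ := interval_min cs φ ωσ hredσ
  obtain ⟨m, a₀, b₀, ha₀, hb₀, hmeq, hmle, hnd1, hnd2⟩ :=
    exists_reduced_rep cs X₁ X₂ (ℓ m₁) m₁ (le_refl _)
  refine ⟨m, ?_, ?_⟩
  · refine ⟨a₀, ha₀, π ω', ?_, b₀, hb₀, ?_⟩
    · rw [hπσ]
      exact bruhatLE_of_sublist cs hredσ hsub'
    · rw [hmeq, ← hm₁]
      group
  · rintro z ⟨a, ha, x, hx, b, hb, rfl⟩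
    obtain ⟨ω'', hsub'', hred'', hπ''⟩ := bruhatLE_subword cs hx hredσ hπσ.symm
    have hm₁x : BruhatLE cs m₁ (x * φ) := by
      have := hb₁ ω'' hsub''
      rwa [hπ''] at this
    have hmx : BruhatLE cs m (x * φ) := bruhatLE_trans cs hmle hm₁x
    obtain ⟨ωb, hXb, hπb⟩ := exists_word_of_mem_closure cs hb
    obtain ⟨ωa, hXa, hπa⟩ := exists_word_of_mem_closure cs ha
    have h3 : BruhatLE cs m ((x * φ) * b) := by
      have := noRightDescent_le_mul cs hnd2 ωb hXb (x * φ) hmx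
      rwa [hπb] at this
    have h4 : BruhatLE cs m (a * ((x * φ) * b)) := by
      have := noLeftDescent_le_mul cs hnd1 ωa hXa ((x * φ) * b) h3
      rwa [hπa] at this
    have h5 : a * ((x * φ) * b) = a * x * φ * b := by group
    rwa [h5] at h4

end CoxAux

/-- Let `τ, φ ∈ W` and `W₁, W₂` standard parabolic subgroups.  (1) The set
`W₁ I(τ⁻¹) φ W₂` depends only on the cosets `τW₁` and `φW₂`: if `τW₁ = τ′W₁` and
`φW₂ = φ′W₂` then `W₁ I(τ′⁻¹) φ′ W₂ = W₁ I(τ⁻¹) φ W₂`.  (2) The set `W₁ I(τ⁻¹) φ W₂`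
has a unique minimal element in the Bruhat order. -/
theorem stmt_15 (cs : CoxeterSystem M W) (W₁ W₂ : Subgroup W)
    (h₁ : IsStdParabolic cs W₁) (h₂ : IsStdParabolic cs W₂) (τ φ : W) :
    (∀ τ' φ' : W, τ⁻¹ * τ' ∈ W₁ → φ⁻¹ * φ' ∈ W₂ →
      KKset cs W₁ W₂ τ' φ' = KKset cs W₁ W₂ τ φ) ∧
    (∃ m : W, IsBrMin cs (KKset cs W₁ W₂ τ φ) m) := by
  obtain ⟨X₁, rfl⟩ := h₁
  obtain ⟨X₂, rfl⟩ := h₂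
  constructor
  · intro τ' φ' hτ hφ
    rw [CoxAux.KKset_phi_invariant cs _ _ τ' hφ, CoxAux.KKset_tau_invariant cs _ φ hτ]
  · exact CoxAux.KKset_isBrMin cs τ φ
end
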